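/- arXiv:1108.1210 — 2 statements merged into one kernel-verified Lean document; each statement's English description precedes it below -/
import Mathlib

section
/- Let r ≥ 1 and C > 0, and suppose the generator L satisfies the r-logSob inequality with constant C. Then for all real q < p < 1, every f : Ω → (0,∞), and every t ≥ (C/4)·log((1−q)/(1−p)), one has ‖T_t f‖_q ≥ ‖f‖_p. -/
open Real Finset

noncomputable section

variable {Ω : Type*}

/-- Expectation `E f = ∑ ω, μ ω * f ω`. -/
def pexp [Fintype Ω] (μ : Ω → ℝ) (f : Ω → ℝ) : ℝ := ∑ ω, μ ω * f ω

/-- Dirichlet form `𝓔(f,g) = E[f · L g]`. -/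
def dform [Fintype Ω] (μ : Ω → ℝ) (L : (Ω → ℝ) →ₗ[ℝ] (Ω → ℝ)) (f g : Ω → ℝ) : ℝ :=
  pexp μ fun ω => f ω * L g ω

/-- Entropy `Ent(f) = E[f log f] − (E f) log (E f)`. -/
def entE [Fintype Ω] (μ : Ω → ℝ) (f : Ω → ℝ) : ℝ :=
  pexp μ (fun ω => f ω * Real.log (f ω)) - pexp μ f * Real.log (pexp μ f)

/-- Variance `Var(f) = E[f²] − (E f)²`. -/
def varE [Fintype Ω] (μ : Ω → ℝ) (f : Ω → ℝ) : ℝ :=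
  pexp μ (fun ω => f ω ^ 2) - (pexp μ f) ^ 2

/-- The structural conditions on the Markov generator `L`: `L 1 = 0`, self-adjointness,
positive semidefiniteness, and nonnegativity of `L f` at a global maximum point of `f`. -/
def IsGen [Fintype Ω] (μ : Ω → ℝ) (L : (Ω → ℝ) →ₗ[ℝ] (Ω → ℝ)) : Prop :=
  L (fun _ => 1) = 0 ∧
  (∀ f g, pexp μ (fun ω => f ω * L g ω) = pexp μ (fun ω => g ω * L f ω)) ∧
  (∀ f, 0 ≤ pexp μ (fun ω => f ω * L f ω)) ∧
  (∀ (f : Ω → ℝ) (ω : Ω), (∀ x, f x ≤ f ω) → 0 ≤ L f ω)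

/-- The `p`-logSob inequality with constant `C` (with the conventions for `p = 0` and `p = 1`). -/
def LogSob [Fintype Ω] (μ : Ω → ℝ) (L : (Ω → ℝ) →ₗ[ℝ] (Ω → ℝ)) (p C : ℝ) : Prop :=
  if p = 0 then
    ∀ f : Ω → ℝ, (∀ ω, 0 < f ω) →
      varE μ (fun ω => Real.log (f ω)) ≤ -(C / 2) * dform μ L f (fun ω => (f ω)⁻¹)
  else if p = 1 then
    ∀ f : Ω → ℝ, (∀ ω, 0 < f ω) →
      entE μ f ≤ C / 4 * dform μ L f (fun ω => Real.log (f ω))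
  else
    ∀ f : Ω → ℝ, (∀ ω, 0 < f ω) →
      entE μ (fun ω => f ω ^ p) ≤
        C * p ^ 2 / (4 * (p - 1)) * dform μ L (fun ω => f ω ^ (p - 1)) f

/-- Markov semigroup `T t = e^{-tL}`. -/
def heat [Fintype Ω] (L : (Ω → ℝ) →ₗ[ℝ] (Ω → ℝ)) (t : ℝ) (f : Ω → ℝ) : Ω → ℝ :=
  NormedSpace.exp ((-t) • (LinearMap.toContinuousLinearMap L)) f

/-- `‖f‖_p` for positive `f` and arbitrary real `p`, with `‖f‖_0 = exp (E log f)`. -/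
def pnorm [Fintype Ω] (μ : Ω → ℝ) (p : ℝ) (f : Ω → ℝ) : ℝ :=
  if p = 0 then Real.exp (pexp μ fun ω => Real.log (f ω))
  else (pexp μ fun ω => f ω ^ p) ^ (1 / p)

/-- `‖f‖_p = (E |f|^p)^{1/p}` for real-valued `f`. -/
def pnormAbs [Fintype Ω] (μ : Ω → ℝ) (p : ℝ) (f : Ω → ℝ) : ℝ :=
  (pexp μ fun ω => |f ω| ^ p) ^ (1 / p)

/-- Hölder conjugate `p' = p/(p-1)`, with the convention `0' = 0`. -/
def hconj (p : ℝ) : ℝ := if p = 0 then 0 else p / (p - 1)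

/-- The simple generator `L = Id − E`. -/
def simpleL [Fintype Ω] (μ : Ω → ℝ) : (Ω → ℝ) →ₗ[ℝ] (Ω → ℝ) where
  toFun f := fun ω => f ω - pexp μ f
  map_add' f g := by
    funext ω
    simp only [Pi.add_apply, pexp, mul_add, Finset.sum_add_distrib]
    ring
  map_smul' c f := by
    funext ω
    simp only [Pi.smul_apply, smul_eq_mul, pexp, RingHom.id_apply]
    rw [mul_sub, Finset.mul_sum]
    congr 1
    exact Finset.sum_congr rfl fun x _ => by ring

set_option maxHeartbeats 1600000
set_option synthInstance.maxHeartbeats 400000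

namespace RHC

open Real Finset intervalIntegral MeasureTheory

/-! ### Two-point integral lemmas -/

noncomputable def Fint (y x κ : ℝ) : ℝ := ∫ u in y..x, u ^ (κ - 1)

lemma Fint_intInt {y x : ℝ} (hy : 0 < y) (hx : y ≤ x) (κ : ℝ) :
    IntervalIntegrable (fun u => u ^ (κ - 1)) volume y x := by
  apply ContinuousOn.intervalIntegrable
  apply ContinuousOn.rpow_const continuousOn_id
  intro u hu
  rw [Set.uIcc_of_le hx] at hu
  exact Or.inl (ne_of_gt (lt_of_lt_of_le hy hu.1))

lemma Fint_zero {y x : ℝ} (hy : 0 < y) (hx : y ≤ x) :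
    Fint y x 0 = Real.log x - Real.log y := by
  have hx0 : 0 < x := lt_of_lt_of_le hy hx
  have h0 : (0:ℝ) ∉ Set.uIcc y x := by
    rw [Set.uIcc_of_le hx]; rintro ⟨h1, h2⟩; linarith
  have heq : Set.EqOn (fun u : ℝ => u ^ ((0:ℝ) - 1)) (fun u : ℝ => u⁻¹) (Set.uIcc y x) := by
    intro u hu
    simp only
    rw [zero_sub, show (-1:ℝ) = ((-1:ℤ):ℝ) by norm_num, Real.rpow_intCast, zpow_neg_one]
  rw [Fint, intervalIntegral.integral_congr heq, integral_inv h0,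
    Real.log_div (ne_of_gt hx0) (ne_of_gt hy)]

lemma Fint_eq {y x : ℝ} (hy : 0 < y) (hx : y ≤ x) {κ : ℝ} (hκ : κ ≠ 0) :
    Fint y x κ = (x ^ κ - y ^ κ) / κ := by
  have h0 : (0:ℝ) ∉ Set.uIcc y x := by
    rw [Set.uIcc_of_le hx]; rintro ⟨h1, h2⟩; linarith
  rw [Fint, integral_rpow (Or.inr ⟨fun h => hκ (by linarith), h0⟩), sub_add_cancel]

lemma twopoint_exp {u v α β γ δ : ℝ} (hu : 0 < u) (hv : 0 < v) (hsum : α + β = γ + δ)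
    (hspread : |α - β| ≤ |γ - δ|) :
    u ^ (α-1) * v ^ (β-1) + u ^ (β-1) * v ^ (α-1) ≤
      u ^ (γ-1) * v ^ (δ-1) + u ^ (δ-1) * v ^ (γ-1) := by
  set a := Real.log u with ha
  set b := Real.log v with hb
  have hrw : ∀ κ : ℝ, u ^ (κ-1) = Real.exp (a * (κ-1)) := fun κ => Real.rpow_def_of_pos hu _
  have hrw' : ∀ κ : ℝ, v ^ (κ-1) = Real.exp (b * (κ-1)) := fun κ => Real.rpow_def_of_pos hv _
  rw [hrw α, hrw β, hrw γ, hrw δ, hrw' α, hrw' β, hrw' γ, hrw' δ]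
  have key : ∀ x y : ℝ, x + y = γ + δ →
      Real.exp (a * (x-1)) * Real.exp (b * (y-1)) + Real.exp (a * (y-1)) * Real.exp (b * (x-1))
      = Real.exp (((γ+δ)/2 - 1) * (a+b)) * (2 * Real.cosh ((x-y)/2 * (a-b))) := by
    intro x y hxy
    have e1 : ((γ+δ)/2 - 1) * (a+b) + (x-y)/2 * (a-b) = a * (x-1) + b * (y-1) := by
      linear_combination (-(a+b)/2) * hxy
    have e2 : ((γ+δ)/2 - 1) * (a+b) + -((x-y)/2 * (a-b)) = a * (y-1) + b * (x-1) := by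
      linear_combination (-(a+b)/2) * hxy
    rw [Real.cosh_eq,
      show Real.exp (((γ+δ)/2 - 1) * (a+b)) *
          (2 * ((Real.exp ((x-y)/2 * (a-b)) + Real.exp (-((x-y)/2 * (a-b))))/2))
        = Real.exp (((γ+δ)/2 - 1) * (a+b) + (x-y)/2 * (a-b))
          + Real.exp (((γ+δ)/2 - 1) * (a+b) + -((x-y)/2 * (a-b))) from by
        rw [Real.exp_add, Real.exp_add]; ring,
      e1, e2, Real.exp_add, Real.exp_add]
  rw [key α β hsum, key γ δ rfl]
  have hcosh : Real.cosh ((α-β)/2 * (a-b)) ≤ Real.cosh ((γ-δ)/2 * (a-b)) := by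
    rw [Real.cosh_le_cosh, abs_mul, abs_mul]
    apply mul_le_mul_of_nonneg_right _ (abs_nonneg _)
    rw [abs_div, abs_div, abs_two]
    linarith
  have := Real.exp_pos (((γ+δ)/2 - 1) * (a+b))
  nlinarith [hcosh]

lemma Fint_mul_le {y x : ℝ} (hy : 0 < y) (hx : y ≤ x) {α β γ δ : ℝ}
    (hsum : α + β = γ + δ) (hspread : |α - β| ≤ |γ - δ|) :
    Fint y x α * Fint y x β ≤ Fint y x γ * Fint y x δ := by
  have hieq : ∀ u : ℝ, ∀ κ₁ κ₂ : ℝ, u ^ (κ₁-1) * Fint y x κ₂ + u ^ (κ₂-1) * Fint y x κ₁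
      = ∫ v in y..x, (u ^ (κ₁-1) * v ^ (κ₂-1) + u ^ (κ₂-1) * v ^ (κ₁-1)) := by
    intro u κ₁ κ₂
    rw [intervalIntegral.integral_add ((Fint_intInt hy hx κ₂).const_mul _)
      ((Fint_intInt hy hx κ₁).const_mul _),
      intervalIntegral.integral_const_mul, intervalIntegral.integral_const_mul]
    simp only [Fint]
  have hInt : ∀ κ₁ κ₂ : ℝ, IntervalIntegrable
      (fun u => u ^ (κ₁ - 1) * Fint y x κ₂ + u ^ (κ₂ - 1) * Fint y x κ₁) volume y x :=
    fun κ₁ κ₂ => ((Fint_intInt hy hx κ₁).mul_const _).add ((Fint_intInt hy hx κ₂).mul_const _)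
  have main : ∫ u in y..x, (u ^ (α-1) * Fint y x β + u ^ (β-1) * Fint y x α)
      ≤ ∫ u in y..x, (u ^ (γ-1) * Fint y x δ + u ^ (δ-1) * Fint y x γ) := by
    apply intervalIntegral.integral_mono_on hx (hInt α β) (hInt γ δ)
    intro u hu
    have hu0 : 0 < u := lt_of_lt_of_le hy hu.1
    rw [hieq u α β, hieq u γ δ]
    apply intervalIntegral.integral_mono_on hx
      (((Fint_intInt hy hx β).const_mul _).add ((Fint_intInt hy hx α).const_mul _))
      (((Fint_intInt hy hx δ).const_mul _).add ((Fint_intInt hy hx γ).const_mul _))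
    intro v hv
    exact twopoint_exp hu0 (lt_of_lt_of_le hy hv.1) hsum hspread
  rw [intervalIntegral.integral_add ((Fint_intInt hy hx α).mul_const _)
      ((Fint_intInt hy hx β).mul_const _),
    intervalIntegral.integral_add ((Fint_intInt hy hx γ).mul_const _)
      ((Fint_intInt hy hx δ).mul_const _),
    intervalIntegral.integral_mul_const, intervalIntegral.integral_mul_const,
    intervalIntegral.integral_mul_const, intervalIntegral.integral_mul_const] at main
  have hF : ∀ κ, (∫ u in y..x, u ^ (κ-1)) = Fint y x κ := fun κ => rfl
  rw [hF, hF, hF, hF] at main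
  nlinarith [main]

lemma prod_diff_eq {b a : ℝ} (hb : 0 < b) (hba : b ≤ a) {κ : ℝ} (hκ : κ ≠ 0) :
    a ^ κ - b ^ κ = κ * Fint b a κ := by
  rw [Fint_eq hb hba hκ]; field_simp

lemma abs_sub_two {m : ℝ} (hm1 : m < 1) : |m - 1 - 1| = 2 - m := by
  rw [show m - 1 - 1 = m - 2 by ring, abs_of_nonpos (by linarith)]; ring

lemma spread_aux {m : ℝ} (hm1 : m < 1) : |m - 0| ≤ |m - 1 - 1| := by
  rw [sub_zero, abs_sub_two hm1]
  exact abs_le.mpr ⟨by linarith, by linarith⟩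

lemma pair_ineq_r' {b a m r : ℝ} (hb : 0 < b) (hba : b ≤ a) (hm1 : m < 1) (hm0 : m ≠ 0)
    (hr : 1 < r) :
    r^2/(r-1) * ((a ^ (m*(r-1)/r) - b ^ (m*(r-1)/r)) * (a ^ (m/r) - b ^ (m/r))) ≤
    m^2/(m-1) * ((a ^ (m-1) - b ^ (m-1)) * (a - b)) := by
  have hr0 : (0:ℝ) < r := by linarith
  have hr1 : r - 1 ≠ 0 := by intro h; nlinarith
  have hα : m*(r-1)/r ≠ 0 := div_ne_zero (mul_ne_zero hm0 hr1) (ne_of_gt hr0)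
  have hβ : m/r ≠ 0 := div_ne_zero hm0 (ne_of_gt hr0)
  have hm1' : m - 1 ≠ 0 := by intro h; nlinarith
  have hspread : |m*(r-1)/r - m/r| ≤ |m - 1 - 1| := by
    have h5 : m*(r-1)/r - m/r = m*(r-2)/r := by field_simp; ring
    rw [h5, abs_sub_two hm1, abs_div, abs_mul, abs_of_pos hr0]
    have h2 : |r-2| ≤ r := abs_le.mpr ⟨by linarith, by linarith⟩
    have h3 : |m| ≤ 2 - m := abs_le.mpr ⟨by linarith, by linarith⟩
    calc |m| * |r-2| / r ≤ |m| * r / r := by gcongr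
      _ = |m| := by field_simp
      _ ≤ 2 - m := h3
  have hsum : m*(r-1)/r + m/r = (m-1) + 1 := by field_simp; ring
  have key := Fint_mul_le hb hba hsum hspread
  rw [prod_diff_eq hb hba hα, prod_diff_eq hb hba hβ, prod_diff_eq hb hba hm1',
    show a - b = a ^ (1:ℝ) - b ^ (1:ℝ) by rw [Real.rpow_one, Real.rpow_one],
    prod_diff_eq hb hba one_ne_zero]
  have hL : r^2/(r-1) * ((m*(r-1)/r * Fint b a (m*(r-1)/r)) * (m/r * Fint b a (m/r)))
      = m^2 * (Fint b a (m*(r-1)/r) * Fint b a (m/r)) := by field_simp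
  have hR : m^2/(m-1) * (((m-1) * Fint b a (m-1)) * (1 * Fint b a 1))
      = m^2 * (Fint b a (m-1) * Fint b a 1) := by field_simp
  rw [hL, hR]
  exact mul_le_mul_of_nonneg_left key (sq_nonneg m)

lemma pair_ineq_r {a b m r : ℝ} (ha : 0 < a) (hb : 0 < b) (hm1 : m < 1) (hm0 : m ≠ 0)
    (hr : 1 < r) :
    r^2/(r-1) * ((a ^ (m*(r-1)/r) - b ^ (m*(r-1)/r)) * (a ^ (m/r) - b ^ (m/r))) ≤
    m^2/(m-1) * ((a ^ (m-1) - b ^ (m-1)) * (a - b)) := by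
  rcases le_total b a with hba | hab
  · exact pair_ineq_r' hb hba hm1 hm0 hr
  · have h := pair_ineq_r' ha hab hm1 hm0 hr
    calc r^2/(r-1) * ((a ^ (m*(r-1)/r) - b ^ (m*(r-1)/r)) * (a ^ (m/r) - b ^ (m/r)))
        = r^2/(r-1) * ((b ^ (m*(r-1)/r) - a ^ (m*(r-1)/r)) * (b ^ (m/r) - a ^ (m/r))) := by ring
      _ ≤ m^2/(m-1) * ((b ^ (m-1) - a ^ (m-1)) * (b - a)) := h
      _ = m^2/(m-1) * ((a ^ (m-1) - b ^ (m-1)) * (a - b)) := by ring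

lemma pair_ineq_one' {b a m : ℝ} (hb : 0 < b) (hba : b ≤ a) (hm1 : m < 1) (hm0 : m ≠ 0) :
    m * ((a ^ m - b ^ m) * (Real.log a - Real.log b)) ≤
    m^2/(m-1) * ((a ^ (m-1) - b ^ (m-1)) * (a - b)) := by
  have hm1' : m - 1 ≠ 0 := by intro h; nlinarith
  have hsum : m + 0 = (m-1) + 1 := by ring
  have key := Fint_mul_le hb hba hsum (spread_aux hm1)
  rw [← Fint_zero hb hba, prod_diff_eq hb hba hm0, prod_diff_eq hb hba hm1',
    show a - b = a ^ (1:ℝ) - b ^ (1:ℝ) by rw [Real.rpow_one, Real.rpow_one],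
    prod_diff_eq hb hba one_ne_zero]
  have hL : m * ((m * Fint b a m) * Fint b a 0) = m^2 * (Fint b a m * Fint b a 0) := by ring
  have hR : m^2/(m-1) * (((m-1) * Fint b a (m-1)) * (1 * Fint b a 1))
      = m^2 * (Fint b a (m-1) * Fint b a 1) := by field_simp
  rw [hL, hR]
  exact mul_le_mul_of_nonneg_left key (sq_nonneg m)

lemma pair_ineq_one {a b m : ℝ} (ha : 0 < a) (hb : 0 < b) (hm1 : m < 1) (hm0 : m ≠ 0) :
    m * ((a ^ m - b ^ m) * (Real.log a - Real.log b)) ≤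
    m^2/(m-1) * ((a ^ (m-1) - b ^ (m-1)) * (a - b)) := by
  rcases le_total b a with hba | hab
  · exact pair_ineq_one' hb hba hm1 hm0
  · have h := pair_ineq_one' ha hab hm1 hm0
    calc m * ((a ^ m - b ^ m) * (Real.log a - Real.log b))
        = m * ((b ^ m - a ^ m) * (Real.log b - Real.log a)) := by ring
      _ ≤ m^2/(m-1) * ((b ^ (m-1) - a ^ (m-1)) * (b - a)) := h
      _ = m^2/(m-1) * ((a ^ (m-1) - b ^ (m-1)) * (a - b)) := by ring

lemma pair_nonpos {a b ν : ℝ} (ha : 0 < a) (hb : 0 < b) (hν : ν < 1) :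
    (a ^ (ν-1) - b ^ (ν-1)) * (a - b) ≤ 0 := by
  rcases le_total a b with h | h
  · have h1 : b ^ (ν-1) ≤ a ^ (ν-1) := Real.rpow_le_rpow_of_nonpos ha h (by linarith)
    exact mul_nonpos_iff.mpr (Or.inl ⟨by linarith, by linarith⟩)
  · have h1 : a ^ (ν-1) ≤ b ^ (ν-1) := Real.rpow_le_rpow_of_nonpos hb h (by linarith)
    exact mul_nonpos_iff.mpr (Or.inr ⟨by linarith, by linarith⟩)

lemma exp_smul_one {𝔸 : Type*} [NormedRing 𝔸] [NormedAlgebra ℝ 𝔸] [CompleteSpace 𝔸] (c : ℝ) :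
    NormedSpace.exp (c • (1 : 𝔸)) = Real.exp c • 1 := by
  have hexp : Real.exp c = ∑' n : ℕ, (n.factorial : ℝ)⁻¹ * c ^ n := by
    rw [Real.exp_eq_exp_ℝ, NormedSpace.exp_eq_tsum ℝ]
    exact tsum_congr fun n => by rw [smul_eq_mul]
  have hsm : Summable fun n : ℕ => (n.factorial : ℝ)⁻¹ * c ^ n :=
    (Real.summable_pow_div_factorial c).congr fun n => by rw [← div_eq_inv_mul]
  calc NormedSpace.exp (c • (1 : 𝔸))
      = ∑' n : ℕ, (n.factorial : ℝ)⁻¹ • (c • (1:𝔸)) ^ n := by rw [NormedSpace.exp_eq_tsum ℝ]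
    _ = ∑' n : ℕ, ((n.factorial : ℝ)⁻¹ * c ^ n) • (1:𝔸) :=
        tsum_congr fun n => by rw [smul_pow, one_pow, smul_smul]
    _ = (∑' n : ℕ, (n.factorial : ℝ)⁻¹ * c ^ n) • (1:𝔸) := Summable.tsum_smul_const hsm 1
    _ = Real.exp c • 1 := by rw [hexp]

end RHC

namespace RHC

section Gen

variable {Ω : Type*} [Fintype Ω] [DecidableEq Ω]

/-- kernel of `L` -/
noncomputable def kk (L : (Ω → ℝ) →ₗ[ℝ] (Ω → ℝ)) (ω x : Ω) : ℝ :=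
  L (fun y => if y = x then 1 else 0) ω

lemma apply_eq_sum (L : (Ω → ℝ) →ₗ[ℝ] (Ω → ℝ)) (g : Ω → ℝ) (ω : Ω) :
    L g ω = ∑ x, g x * kk L ω x := by
  have hg : g = ∑ x : Ω, g x • (fun y => if y = x then (1:ℝ) else 0) := by
    funext y
    simp [Finset.sum_apply, Pi.smul_apply, smul_eq_mul, mul_ite, mul_one, mul_zero,
      Finset.sum_ite_eq]
  conv_lhs => rw [hg]
  rw [map_sum]
  simp [Finset.sum_apply, kk, Pi.smul_apply, smul_eq_mul]

lemma kk_rowsum {μ : Ω → ℝ} {L : (Ω → ℝ) →ₗ[ℝ] (Ω → ℝ)} (hL : IsGen μ L) (ω : Ω) :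
    ∑ x, kk L ω x = 0 := by
  have := apply_eq_sum L (fun _ => 1) ω
  simpa [hL.1] using this.symm

lemma kk_symm {μ : Ω → ℝ} {L : (Ω → ℝ) →ₗ[ℝ] (Ω → ℝ)} (hL : IsGen μ L) (ω x : Ω) :
    μ ω * kk L ω x = μ x * kk L x ω := by
  have h := hL.2.1 (fun y => if y = ω then 1 else 0) (fun y => if y = x then 1 else 0)
  simp only [pexp, ite_mul, one_mul, zero_mul, mul_ite, mul_zero,
    Finset.sum_ite_eq', Finset.mem_univ, if_true] at h
  exact h

lemma kk_offdiag_nonpos {μ : Ω → ℝ} {L : (Ω → ℝ) →ₗ[ℝ] (Ω → ℝ)} (hL : IsGen μ L)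
    {ω x : Ω} (h : ω ≠ x) : kk L ω x ≤ 0 := by
  have hmax : ∀ y, (fun y => -(if y = x then (1:ℝ) else 0)) y ≤
      (fun y => -(if y = x then (1:ℝ) else 0)) ω := by
    intro y
    simp only [if_neg h]
    by_cases hy : y = x <;> simp [hy]
  have := hL.2.2.2 _ ω hmax
  have hneg : L (fun y => -(if y = x then (1:ℝ) else 0)) ω = -(kk L ω x) := by
    have : (fun y => -(if y = x then (1:ℝ) else 0)) =
        -(fun y => if y = x then (1:ℝ) else 0) := by funext y; simp
    rw [this, map_neg]
    rfl
  rw [hneg] at this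
  linarith [this]

lemma dform_eq_sum (μ : Ω → ℝ) (L : (Ω → ℝ) →ₗ[ℝ] (Ω → ℝ)) (f g : Ω → ℝ) :
    dform μ L f g = ∑ ω, ∑ x, μ ω * kk L ω x * (f ω * g x) := by
  unfold dform pexp
  refine Finset.sum_congr rfl fun ω _ => ?_
  dsimp only
  rw [apply_eq_sum L g ω, Finset.mul_sum, Finset.mul_sum]
  refine Finset.sum_congr rfl fun x _ => by ring

lemma dform_pair {μ : Ω → ℝ} {L : (Ω → ℝ) →ₗ[ℝ] (Ω → ℝ)} (hL : IsGen μ L)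
    (f g : Ω → ℝ) :
    dform μ L f g =
      ∑ ω, ∑ x, (-(μ ω * kk L ω x) / 2) * ((f x - f ω) * (g x - g ω)) := by
  have hrow : ∀ ω, ∑ x, kk L ω x = 0 := kk_rowsum hL
  have hcolsum : ∀ x, ∑ ω, μ ω * kk L ω x = 0 := by
    intro x
    have : ∀ ω, μ ω * kk L ω x = μ x * kk L x ω := fun ω => kk_symm hL ω x
    rw [Finset.sum_congr rfl fun ω _ => this ω, ← Finset.mul_sum, hrow, mul_zero]
  have expand : ∀ ω x, (-(μ ω * kk L ω x) / 2) * ((f x - f ω) * (g x - g ω)) =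
      -(1/2) * (μ ω * kk L ω x * (f x * g x)) + (1/2) * (μ ω * kk L ω x * (f x * g ω))
      + (1/2) * (μ ω * kk L ω x * (f ω * g x)) - (1/2) * (μ ω * kk L ω x * (f ω * g ω)) := by
    intro ω x; ring
  have h1 : ∑ ω, ∑ x, μ ω * kk L ω x * (f x * g x) = 0 := by
    rw [Finset.sum_comm]
    refine Finset.sum_eq_zero fun x _ => ?_
    rw [← Finset.sum_mul, hcolsum, zero_mul]
  have h4 : ∑ ω, ∑ x, μ ω * kk L ω x * (f ω * g ω) = 0 := by
    refine Finset.sum_eq_zero fun ω _ => ?_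
    have : ∀ x, μ ω * kk L ω x * (f ω * g ω) = (μ ω * (f ω * g ω)) * kk L ω x := by
      intro x; ring
    rw [Finset.sum_congr rfl fun x _ => this x, ← Finset.mul_sum, hrow, mul_zero]
  have h2 : ∑ ω, ∑ x, μ ω * kk L ω x * (f x * g ω)
      = ∑ ω, ∑ x, μ ω * kk L ω x * (f ω * g x) := by
    rw [Finset.sum_comm]
    refine Finset.sum_congr rfl fun a _ => Finset.sum_congr rfl fun b _ => ?_
    linear_combination (f a * g b) * (kk_symm hL b a)
  calc dform μ L f g = ∑ ω, ∑ x, μ ω * kk L ω x * (f ω * g x) := dform_eq_sum μ L f g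
    _ = ∑ ω, ∑ x, ((-(μ ω * kk L ω x) / 2) * ((f x - f ω) * (g x - g ω))) := by
        rw [Finset.sum_congr rfl fun ω _ => Finset.sum_congr rfl fun x _ => expand ω x]
        simp only [Finset.sum_add_distrib, Finset.sum_sub_distrib, ← Finset.mul_sum]
        rw [h1, h2, h4]
        ring

lemma dform_scaled_mono {μ : Ω → ℝ} {L : (Ω → ℝ) →ₗ[ℝ] (Ω → ℝ)} (hL : IsGen μ L)
    (hμpos : ∀ ω, 0 < μ ω) {f1 g1 f2 g2 : Ω → ℝ} {c1 c2 : ℝ}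
    (h : ∀ ω x, ω ≠ x →
      c1 * ((f1 x - f1 ω) * (g1 x - g1 ω)) ≤ c2 * ((f2 x - f2 ω) * (g2 x - g2 ω))) :
    c1 * dform μ L f1 g1 ≤ c2 * dform μ L f2 g2 := by
  rw [dform_pair hL, dform_pair hL]
  simp only [Finset.mul_sum]
  refine Finset.sum_le_sum fun ω _ => Finset.sum_le_sum fun x _ => ?_
  by_cases hωx : ω = x
  · subst hωx; simp
  · have hw : 0 ≤ -(μ ω * kk L ω x) / 2 := by
      have h1 := kk_offdiag_nonpos hL hωx
      have h2 := (hμpos ω).le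
      nlinarith
    calc c1 * (-(μ ω * kk L ω x) / 2 * ((f1 x - f1 ω) * (g1 x - g1 ω)))
        = (-(μ ω * kk L ω x) / 2) * (c1 * ((f1 x - f1 ω) * (g1 x - g1 ω))) := by ring
      _ ≤ (-(μ ω * kk L ω x) / 2) * (c2 * ((f2 x - f2 ω) * (g2 x - g2 ω))) :=
          mul_le_mul_of_nonneg_left (h ω x hωx) hw
      _ = c2 * (-(μ ω * kk L ω x) / 2 * ((f2 x - f2 ω) * (g2 x - g2 ω))) := by ring

lemma dform_nonpos {μ : Ω → ℝ} {L : (Ω → ℝ) →ₗ[ℝ] (Ω → ℝ)} (hL : IsGen μ L)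
    (hμpos : ∀ ω, 0 < μ ω) {f1 g1 : Ω → ℝ}
    (h : ∀ ω x, ω ≠ x → (f1 x - f1 ω) * (g1 x - g1 ω) ≤ 0) :
    dform μ L f1 g1 ≤ 0 := by
  have := dform_scaled_mono hL hμpos (f2 := fun _ => (0:ℝ)) (g2 := fun _ => (0:ℝ))
    (c1 := (1:ℝ)) (c2 := (1:ℝ)) (by intro ω x hωx; simpa using h ω x hωx)
  have h0 : dform μ L (fun _ => (0:ℝ)) (fun _ => (0:ℝ)) = 0 := by
    simp [dform, pexp]
  rw [h0] at this
  linarith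

lemma pexp_pos [Nonempty Ω] {μ : Ω → ℝ} (hμpos : ∀ ω, 0 < μ ω) {g : Ω → ℝ}
    (hg : ∀ ω, 0 < g ω) : 0 < pexp μ g := by
  apply Finset.sum_pos (fun ω _ => mul_pos (hμpos ω) (hg ω)) Finset.univ_nonempty

lemma cdiv_helper (C m Δ : ℝ) : C/4 * (m^2/(m-1) * Δ) = C * m ^ 2 / (4*(m-1)) * Δ := by
  rw [← mul_assoc, div_mul_div_comm]

/-- transfer of the log-Sobolev inequality to exponents below 1 -/
lemma logSob_transfer {μ : Ω → ℝ} (hμpos : ∀ ω, 0 < μ ω)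
    {L : (Ω → ℝ) →ₗ[ℝ] (Ω → ℝ)} (hL : IsGen μ L) {r C : ℝ} (hr : 1 ≤ r) (hC : 0 < C)
    (hLS : LogSob μ L r C) {m : ℝ} (hm1 : m < 1) (hm0 : m ≠ 0)
    (f : Ω → ℝ) (hf : ∀ ω, 0 < f ω) :
    entE μ (fun ω => f ω ^ m) ≤ C * m ^ 2 / (4 * (m - 1)) * dform μ L (fun ω => f ω ^ (m-1)) f := by
  have hC4 : (0:ℝ) ≤ C/4 := by positivity
  rcases eq_or_lt_of_le hr with hr1 | hr1
  · -- r = 1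
    rw [LogSob, if_neg (by rw [← hr1]; norm_num), if_pos hr1.symm] at hLS
    have h := hLS (fun ω => f ω ^ m) (fun ω => Real.rpow_pos_of_pos (hf ω) m)
    have hlog : (fun ω => Real.log ((fun ω => f ω ^ m) ω)) = fun ω => m * Real.log (f ω) :=
      funext fun ω => Real.log_rpow (hf ω) m
    rw [hlog] at h
    have hsm : dform μ L (fun ω => f ω ^ m) (fun ω => m * Real.log (f ω))
        = m * dform μ L (fun ω => f ω ^ m) (fun ω => Real.log (f ω)) := by
      unfold dform pexp
      rw [Finset.mul_sum]
      refine Finset.sum_congr rfl fun ω _ => ?_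
      have hLsm : L (fun ω => m * Real.log (f ω)) = m • L (fun ω => Real.log (f ω)) := by
        rw [← map_smul]
        congr 1
      rw [hLsm]
      simp only [Pi.smul_apply, smul_eq_mul]
      ring
    rw [hsm] at h
    refine le_trans h ?_
    have := dform_scaled_mono hL hμpos (c1 := C/4*m) (c2 := C * m ^ 2 / (4 * (m - 1)))
      (f1 := fun ω => f ω ^ m) (g1 := fun ω => Real.log (f ω))
      (f2 := fun ω => f ω ^ (m-1)) (g2 := f) ?_
    · calc C / 4 * (m * dform μ L (fun ω => f ω ^ m) fun ω => Real.log (f ω))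
          = C/4*m * dform μ L (fun ω => f ω ^ m) fun ω => Real.log (f ω) := by ring
        _ ≤ _ := this
    · intro ω x hωx
      have hp := pair_ineq_one (hf x) (hf ω) hm1 hm0
      have h2 := mul_le_mul_of_nonneg_left hp hC4
      refine le_trans (le_of_eq (by ring)) (le_trans h2 (le_of_eq (cdiv_helper C m _)))
  · -- 1 < r
    have hrr0 : r ≠ 0 := by intro h; rw [h] at hr1; norm_num at hr1
    rw [LogSob, if_neg hrr0, if_neg (ne_of_gt hr1)] at hLS
    have h := hLS (fun ω => f ω ^ (m/r)) (fun ω => Real.rpow_pos_of_pos (hf ω) _)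
    have h1 : (fun ω => ((fun ω => f ω ^ (m/r)) ω) ^ r) = fun ω => f ω ^ m := by
      funext ω
      rw [← Real.rpow_mul (hf ω).le, div_mul_cancel₀ _ hrr0]
    have h2 : (fun ω => ((fun ω => f ω ^ (m/r)) ω) ^ (r-1)) = fun ω => f ω ^ (m*(r-1)/r) := by
      funext ω
      rw [← Real.rpow_mul (hf ω).le]
      congr 1
      field_simp
    rw [h1, h2] at h
    refine le_trans h ?_
    apply dform_scaled_mono hL hμpos
    intro ω x hωx
    have hp := pair_ineq_r (hf x) (hf ω) hm1 hm0 hr1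
    have h2 := mul_le_mul_of_nonneg_left hp hC4
    refine le_trans (le_of_eq (cdiv_helper C r _).symm) (le_trans h2 (le_of_eq (cdiv_helper C m _)))

end Gen
end RHC

namespace RHC

section Heat

variable {Ω : Type*} [Fintype Ω] [DecidableEq Ω]

lemma heat_zero (L : (Ω → ℝ) →ₗ[ℝ] (Ω → ℝ)) (f : Ω → ℝ) : heat L 0 f = f := by
  rw [heat, neg_zero, zero_smul, NormedSpace.exp_zero]
  rfl

lemma heat_hasDerivAt (L : (Ω → ℝ) →ₗ[ℝ] (Ω → ℝ)) (f : Ω → ℝ) (ω : Ω) (s : ℝ) :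
    HasDerivAt (fun u => heat L u f ω) (-(L (heat L s f) ω)) s := by
  set A := LinearMap.toContinuousLinearMap L with hA
  have h1 : HasDerivAt (fun u : ℝ => NormedSpace.exp (u • A))
      (A * NormedSpace.exp ((-s) • A)) (-s) := hasDerivAt_exp_smul_const' A (-s)
  have hneg : HasDerivAt (fun u : ℝ => -u) (-1) s := (hasDerivAt_id s).neg
  have h2 : HasDerivAt (fun u : ℝ => NormedSpace.exp ((-u) • A))
      ((-1 : ℝ) • (A * NormedSpace.exp ((-s) • A))) s := h1.scomp s hneg
  set T : ((Ω → ℝ) →L[ℝ] (Ω → ℝ)) →L[ℝ] ℝ :=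
    (ContinuousLinearMap.proj ω).comp (ContinuousLinearMap.apply ℝ (Ω → ℝ) f) with hT
  have h3 := (T.hasFDerivAt).comp_hasDerivAt s h2
  have e2 : T ((-1 : ℝ) • (A * NormedSpace.exp ((-s) • A))) = -(L (heat L s f) ω) := by
    simp only [hT, map_smul, ContinuousLinearMap.comp_apply, ContinuousLinearMap.apply_apply,
      ContinuousLinearMap.mul_apply, ContinuousLinearMap.proj_apply, smul_eq_mul]
    rw [heat, hA]
    simp [LinearMap.coe_toContinuousLinearMap']
  rw [e2] at h3
  exact h3

lemma heat_pos [Nonempty Ω] {μ : Ω → ℝ} {L : (Ω → ℝ) →ₗ[ℝ] (Ω → ℝ)}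
    (hL : IsGen μ L) {f : Ω → ℝ} (hf : ∀ ω, 0 < f ω) {s : ℝ} (hs : 0 ≤ s) (ω : Ω) :
    0 < heat L s f ω := by
  obtain ⟨c', hc'⟩ := Finite.exists_le fun ω => kk L ω ω
  set c := max c' 0 with hcdef
  have hc0 : 0 ≤ c := le_max_right _ _
  have hc : ∀ ω', kk L ω' ω' ≤ c := fun ω' => le_trans (hc' ω') (le_max_left _ _)
  set A := LinearMap.toContinuousLinearMap L with hA
  set B := c • (1 : (Ω → ℝ) →L[ℝ] (Ω → ℝ)) - A with hB
  have hBpos : ∀ g : Ω → ℝ, (∀ x, 0 ≤ g x) → ∀ ω', 0 ≤ B g ω' := by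
    intro g hg ω'
    have hLg : L g ω' ≤ c * g ω' := by
      rw [apply_eq_sum L g ω']
      calc ∑ x, g x * kk L ω' x ≤ ∑ x, (if x = ω' then c * g x else 0) := by
            apply Finset.sum_le_sum
            intro x _
            by_cases hx : x = ω'
            · subst hx
              simp only [if_pos rfl]
              calc g x * kk L x x ≤ g x * c := mul_le_mul_of_nonneg_left (hc x) (hg x)
                _ = c * g x := mul_comm _ _
            · simp only [if_neg hx]
              exact mul_nonpos_iff.mpr (Or.inl ⟨hg x, kk_offdiag_nonpos hL (Ne.symm hx)⟩)
        _ = c * g ω' := by rw [Finset.sum_ite_eq' Finset.univ ω' fun x => c * g x]; simp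
    have hBg : B g ω' = c * g ω' - L g ω' := by
      simp [hB, ContinuousLinearMap.sub_apply, hA]
    rw [hBg]
    linarith
  have hpow : ∀ n : ℕ, ∀ ω', 0 ≤ ((s • B) ^ n) f ω' := by
    intro n
    induction n with
    | zero => intro ω'; simpa using (hf ω').le
    | succ n ih =>
      intro ω'
      rw [pow_succ']
      have hmul : ((s • B) * ((s • B) ^ n)) f ω' = s * (B (((s • B) ^ n) f) ω') := by
        simp [ContinuousLinearMap.mul_apply]
      rw [hmul]
      exact mul_nonneg hs (hBpos _ ih ω')
  have hsplit : (-s) • A = s • B + (-(s*c)) • (1 : (Ω → ℝ) →L[ℝ] (Ω → ℝ)) := by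
    ext g x
    simp only [hB, ContinuousLinearMap.smul_apply, ContinuousLinearMap.sub_apply,
      ContinuousLinearMap.add_apply, ContinuousLinearMap.one_apply, Pi.smul_apply,
      Pi.sub_apply, Pi.add_apply, smul_eq_mul]
    ring
  have hcomm : Commute (s • B) ((-(s*c)) • (1 : (Ω → ℝ) →L[ℝ] (Ω → ℝ))) :=
    (Commute.one_right (s • B)).smul_right _
  have hexp : heat L s f ω = Real.exp (-(s*c)) * (NormedSpace.exp (s • B) f ω) := by
    rw [heat, ← hA, hsplit, NormedSpace.exp_add_of_commute_of_mem_ball (𝕂 := ℝ) hcomm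
      ((NormedSpace.expSeries_radius_eq_top ℝ ((Ω → ℝ) →L[ℝ] (Ω → ℝ))).symm ▸ edist_lt_top _ _)
      ((NormedSpace.expSeries_radius_eq_top ℝ ((Ω → ℝ) →L[ℝ] (Ω → ℝ))).symm ▸ edist_lt_top _ _), exp_smul_one]
    simp [ContinuousLinearMap.mul_apply, map_smul]
  set T : ((Ω → ℝ) →L[ℝ] (Ω → ℝ)) →L[ℝ] ℝ :=
    (ContinuousLinearMap.proj ω).comp (ContinuousLinearMap.apply ℝ (Ω → ℝ) f) with hT
  have hsm := NormedSpace.expSeries_summable' (𝕂 := ℝ) (s • B)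
  have hmap : NormedSpace.exp (s • B) f ω
      = ∑' n : ℕ, (n.factorial : ℝ)⁻¹ * (((s • B) ^ n) f ω) := by
    have hts := T.map_tsum hsm
    calc NormedSpace.exp (s • B) f ω = T (NormedSpace.exp (s • B)) := rfl
      _ = ∑' n : ℕ, T ((n.factorial : ℝ)⁻¹ • (s • B) ^ n) := by
          rw [NormedSpace.exp_eq_tsum ℝ]
          exact hts
      _ = ∑' n : ℕ, (n.factorial : ℝ)⁻¹ * (((s • B) ^ n) f ω) :=
          tsum_congr fun n => by simp [hT, smul_eq_mul]
  have hsm2 : Summable fun n : ℕ => (n.factorial : ℝ)⁻¹ * (((s • B) ^ n) f ω) := by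
    have hmp := hsm.map T.toLinearMap.toAddMonoidHom T.continuous
    refine hmp.congr fun n => ?_
    simp [hT, smul_eq_mul]
  have hge : f ω ≤ NormedSpace.exp (s • B) f ω := by
    rw [hmap]
    have h0 : (fun n : ℕ => (n.factorial : ℝ)⁻¹ * (((s • B) ^ n) f ω)) 0 = f ω := by
      simp
    calc f ω = (fun n : ℕ => (n.factorial : ℝ)⁻¹ * (((s • B) ^ n) f ω)) 0 := h0.symm
      _ ≤ ∑' n, (n.factorial : ℝ)⁻¹ * (((s • B) ^ n) f ω) := by
          apply Summable.le_tsum hsm2 0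
          intro j _
          exact mul_nonneg (by positivity) (hpow j ω)
  rw [hexp]
  have hep := Real.exp_pos (-(s*c))
  nlinarith [hf ω, hge]

end Heat
end RHC

/-- reverse hypercontractivity from the `r`-logSob inequality, `r ≥ 1`. -/
theorem reverse_hypercontractivity_of_logSob [Fintype Ω] (μ : Ω → ℝ)
    (hμpos : ∀ ω, 0 < μ ω) (hμ1 : ∑ ω, μ ω = 1)
    (L : (Ω → ℝ) →ₗ[ℝ] (Ω → ℝ)) (hL : IsGen μ L)
    (r C : ℝ) (hr : 1 ≤ r) (hC : 0 < C) (hLS : LogSob μ L r C)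
    (p q : ℝ) (hqp : q < p) (hp1 : p < 1)
    (t : ℝ) (ht : C / 4 * Real.log ((1 - q) / (1 - p)) ≤ t)
    (f : Ω → ℝ) (hf : ∀ ω, 0 < f ω) :
    pnorm μ p f ≤ pnorm μ q (heat L t f) := by
  classical
  haveI hne : Nonempty Ω := by
    by_contra h
    rw [not_nonempty_iff] at h
    rw [Finset.univ_eq_empty, Finset.sum_empty] at hμ1
    norm_num at hμ1
  have hq1 : q < 1 := lt_trans hqp hp1
  have hfrac : 1 < (1 - q) / (1 - p) := by
    rw [lt_div_iff₀ (by linarith)]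
    linarith
  set t₀ : ℝ := C / 4 * Real.log ((1 - q) / (1 - p)) with ht₀def
  have ht₀pos : 0 < t₀ := mul_pos (by positivity) (Real.log_pos hfrac)
  have htpos : 0 < t := lt_of_lt_of_le ht₀pos ht
  set θ : ℝ := t₀ / t with hθdef
  have hθpos : 0 < θ := div_pos ht₀pos htpos
  have hθle : θ ≤ 1 := by rw [hθdef, div_le_one htpos]; exact ht
  set Q : ℝ → ℝ := fun s => 1 - (1 - p) * Real.exp (4 * θ * s / C) with hQdef
  set Qd : ℝ → ℝ := fun s => -(4 * θ / C) * (1 - Q s) with hQddef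
  have h1Q : ∀ s, 1 - Q s = (1 - p) * Real.exp (4 * θ * s / C) := by
    intro s; simp only [hQdef]; ring
  have h1Qpos : ∀ s, 0 < 1 - Q s := by
    intro s
    rw [h1Q s]
    have := Real.exp_pos (4 * θ * s / C)
    nlinarith
  have hQlt1 : ∀ s, Q s < 1 := fun s => by have := h1Qpos s; linarith
  have hQdneg : ∀ s, Qd s < 0 := by
    intro s
    have h4 : 0 < 4*θ/C := by positivity
    have h5 := h1Qpos s
    simp only [hQddef]
    nlinarith [mul_pos h4 h5]
  have hQ0 : Q 0 = p := by
    simp only [hQdef, mul_zero, zero_div, Real.exp_zero, mul_one]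
    ring
  have hQt : Q t = q := by
    have hlog : 4 * θ * t / C = Real.log ((1 - q) / (1 - p)) := by
      rw [hθdef, ht₀def]
      field_simp
    simp only [hQdef]
    rw [hlog, Real.exp_log (by positivity)]
    have h1p : (1:ℝ) - p ≠ 0 := by linarith
    field_simp
    ring
  have hQder : ∀ s, HasDerivAt Q (Qd s) s := by
    intro s
    have h1 : HasDerivAt (fun s' : ℝ => 4*θ*s'/C) (4*θ/C) s := by
      simpa using ((hasDerivAt_id s).const_mul (4*θ)).div_const C
    have h2 := (Real.hasDerivAt_exp (4*θ*s/C)).comp s h1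
    have h3 := (h2.const_mul (1-p)).const_sub 1
    have hval : Qd s = -((1-p) * (Real.exp (4*θ*s/C) * (4*θ/C))) := by
      simp only [hQddef, h1Q s]; ring
    rw [hQdef, hval]
    exact h3
  have hQanti : StrictAnti Q := by
    intro a b hab
    have h4θ : (0:ℝ) < 4*θ := by linarith
    have h4 : 4*θ*a/C < 4*θ*b/C := by
      rw [div_lt_div_iff₀ hC hC]
      have h5 := mul_lt_mul_of_pos_left hab h4θ
      nlinarith
    have hexp := Real.exp_lt_exp.mpr h4
    have h6 : (1-p) * Real.exp (4*θ*a/C) < (1-p) * Real.exp (4*θ*b/C) :=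
      mul_lt_mul_of_pos_left hexp (by linarith)
    simp only [hQdef]
    linarith
  set u : ℝ → Ω → ℝ := fun s => heat L s f with hudef
  have hu0 : u 0 = f := RHC.heat_zero L f
  have hupos : ∀ s ∈ Set.Icc (0:ℝ) t, ∀ ω, 0 < u s ω := fun s hs ω =>
    RHC.heat_pos hL hf hs.1 ω
  have huder : ∀ (ω : Ω) (s : ℝ), HasDerivAt (fun s' => u s' ω) (-(L (u s) ω)) s :=
    fun ω s => RHC.heat_hasDerivAt L f ω s
  have hucont : ∀ (ω : Ω) (s : ℝ), ContinuousAt (fun s' => u s' ω) s :=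
    fun ω s => (huder ω s).continuousAt
  set Pf : ℝ → ℝ := fun s => pexp μ (fun ω => u s ω ^ Q s) with hPfdef
  set EA : ℝ → ℝ := fun s => pexp μ (fun ω => u s ω ^ Q s * Real.log (u s ω)) with hEAdef
  set Bf : ℝ → ℝ := fun s => dform μ L (fun ω => u s ω ^ (Q s - 1)) (u s) with hBfdef
  set Ψ : ℝ → ℝ := fun s => if Q s = 0 then pexp μ (fun ω => Real.log (u s ω))
    else Real.log (Pf s) / Q s with hΨdef
  have hPfpos : ∀ s ∈ Set.Icc (0:ℝ) t, 0 < Pf s := fun s hs =>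
    RHC.pexp_pos hμpos fun ω => Real.rpow_pos_of_pos (hupos s hs ω) _
  have hPfder : ∀ s ∈ Set.Icc (0:ℝ) t, HasDerivAt Pf (Qd s * EA s - Q s * Bf s) s := by
    intro s hs
    have hterm : ∀ ω : Ω, HasDerivAt (fun s' => u s' ω ^ Q s')
        ((u s ω ^ Q s) * (Real.log (u s ω) * Qd s + Q s * (-(L (u s) ω) / u s ω))) s := by
      intro ω
      have hpos := hupos s hs ω
      have hev : ∀ᶠ s' in nhds s, 0 < u s' ω :=
        (hucont ω s).eventually (eventually_gt_nhds hpos)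
      have hlog := (huder ω s).log (ne_of_gt hpos)
      have hinner := hlog.mul (hQder s)
      have hE := hinner.exp
      have heq : (fun s' => Real.exp (Real.log (u s' ω) * Q s'))
          =ᶠ[nhds s] fun s' => u s' ω ^ Q s' := by
        filter_upwards [hev] with s' hs' using (Real.rpow_def_of_pos hs' _).symm
      have hD := hE.congr_of_eventuallyEq heq.symm
      refine hD.congr_deriv ?_
      simp only [Pi.mul_apply]
      rw [Real.rpow_def_of_pos hpos]
      ring
    have hsum := HasDerivAt.fun_sum (fun ω (_ : ω ∈ Finset.univ) => (hterm ω).const_mul (μ ω))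
    have hval : ∑ ω, μ ω * ((u s ω ^ Q s) *
          (Real.log (u s ω) * Qd s + Q s * (-(L (u s) ω) / u s ω)))
        = Qd s * EA s - Q s * Bf s := by
      simp only [hEAdef, hBfdef, dform, pexp]
      rw [Finset.mul_sum, Finset.mul_sum, ← Finset.sum_sub_distrib]
      refine Finset.sum_congr rfl fun ω _ => ?_
      have hpos := hupos s hs ω
      have hq1 : u s ω ^ (Q s - 1) = u s ω ^ Q s / u s ω := by
        rw [Real.rpow_sub hpos, Real.rpow_one]
      rw [hq1]
      field_simp
      ring
    rw [← hval]
    simpa [hPfdef, pexp] using hsum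
  have hΨder : ∀ s ∈ Set.Icc (0:ℝ) t, Q s ≠ 0 → ∃ d : ℝ, HasDerivAt Ψ d s ∧ 0 ≤ d := by
    intro s hs h0
    have hGder : HasDerivAt (fun s' => Real.log (Pf s')) ((Qd s * EA s - Q s * Bf s) / Pf s) s :=
      (hPfder s hs).log (ne_of_gt (hPfpos s hs))
    have halt : HasDerivAt (fun s' => Real.log (Pf s') / Q s')
        ((((Qd s * EA s - Q s * Bf s) / Pf s) * Q s - Real.log (Pf s) * Qd s) / Q s ^ 2) s :=
      hGder.div (hQder s) h0
    have hev : ∀ᶠ s' in nhds s, Q s' ≠ 0 := (hQder s).continuousAt.eventually_ne h0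
    have heqΨ : Ψ =ᶠ[nhds s] fun s' => Real.log (Pf s') / Q s' := by
      filter_upwards [hev] with s' h'
      simp only [hΨdef, if_neg h']
    have hd := halt.congr_of_eventuallyEq heqΨ
    refine ⟨_, hd, ?_⟩
    have hEnt := RHC.logSob_transfer hμpos hL hr hC hLS (hQlt1 s) h0 (u s)
      (fun ω => hupos s hs ω)
    have hEnt_eq : entE μ (fun ω => u s ω ^ Q s) = Q s * EA s - Pf s * Real.log (Pf s) := by
      rw [entE]
      congr 1
      simp only [hEAdef, pexp]
      rw [Finset.mul_sum]
      refine Finset.sum_congr rfl fun ω _ => ?_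
      rw [Real.log_rpow (hupos s hs ω)]
      ring
    have hBle : Bf s ≤ 0 := by
      rw [hBfdef]
      apply RHC.dform_nonpos hL hμpos
      intro ω x hωx
      exact RHC.pair_nonpos (hupos s hs x) (hupos s hs ω) (hQlt1 s)
    have hQdn := hQdneg s
    have hq1s : Q s - 1 ≠ 0 := ne_of_lt (by have := hQlt1 s; linarith)
    have hstep : Qd s * (C * Q s ^ 2 / (4 * (Q s - 1)) * Bf s) = θ * (Q s ^ 2 * Bf s) := by
      simp only [hQddef]
      field_simp
      ring
    have h1 : θ * (Q s ^ 2 * Bf s) ≤ Qd s * entE μ (fun ω => u s ω ^ Q s) := by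
      rw [← hstep]
      exact mul_le_mul_of_nonpos_left hEnt hQdn.le
    have h3 : 0 ≤ (θ - 1) * (Q s ^ 2 * Bf s) := by
      have ha : 0 ≤ (1 - θ) := by linarith
      have hb : 0 ≤ -(Q s ^ 2 * Bf s) := by nlinarith [sq_nonneg (Q s)]
      nlinarith [mul_nonneg ha hb]
    have hnum : 0 ≤ Qd s * entE μ (fun ω => u s ω ^ Q s) - Q s ^ 2 * Bf s := by nlinarith
    have hvald : (((Qd s * EA s - Q s * Bf s) / Pf s) * Q s - Real.log (Pf s) * Qd s)
        = (Qd s * entE μ (fun ω => u s ω ^ Q s) - Q s ^ 2 * Bf s) / Pf s := by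
      rw [hEnt_eq]
      have hP0 := ne_of_gt (hPfpos s hs)
      field_simp
      ring
    rw [hvald]
    exact div_nonneg (div_nonneg hnum (hPfpos s hs).le) (sq_nonneg _)
  have hΨcont : ∀ s ∈ Set.Icc (0:ℝ) t, ContinuousAt Ψ s := by
    intro s hs
    by_cases h0 : Q s = 0
    · have hPs : Pf s = 1 := by
        simp only [hPfdef, pexp, h0, Real.rpow_zero, mul_one]
        exact hμ1
      have hGder : HasDerivAt (fun s' => Real.log (Pf s'))
          ((Qd s * EA s - Q s * Bf s) / Pf s) s :=
        (hPfder s hs).log (ne_of_gt (hPfpos s hs))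
      have hGval : (Qd s * EA s - Q s * Bf s) / Pf s = Qd s * EA s := by
        rw [h0, hPs]; ring
      rw [hGval] at hGder
      have hG0 : Real.log (Pf s) = 0 := by rw [hPs, Real.log_one]
      have hGslope := hasDerivAt_iff_tendsto_slope.mp hGder
      have hQslope := hasDerivAt_iff_tendsto_slope.mp (hQder s)
      have hdiv := hGslope.div hQslope (ne_of_lt (hQdneg s))
      have hEAval : EA s = pexp μ fun ω => Real.log (u s ω) := by
        simp only [hEAdef, h0, Real.rpow_zero, one_mul]
      have hcancel : ∀ x y z : ℝ, z ≠ 0 → x / z / (y / z) = x / y := by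
        intro x y z hz
        rw [div_div_div_comm, div_self hz, div_one]
      have hev2 : (fun s' => slope (fun s'' => Real.log (Pf s'')) s s' / slope Q s s')
          =ᶠ[nhdsWithin s {s}ᶜ] Ψ := by
        filter_upwards [self_mem_nhdsWithin] with s' hs'
        have hs'ne : s' - s ≠ 0 := sub_ne_zero.mpr hs'
        have hQ' : Q s' ≠ 0 := fun hcon => hs' (hQanti.injective (hcon.trans h0.symm))
        rw [slope_def_field, slope_def_field, hG0, h0, sub_zero, sub_zero,
          hcancel _ _ _ hs'ne]
        simp only [hΨdef, if_neg hQ']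
      have hT : Filter.Tendsto Ψ (nhdsWithin s {s}ᶜ) (nhds (Ψ s)) := by
        have hlim := hdiv.congr' hev2
        have hΨs : Ψ s = EA s := by
          simp only [hΨdef, if_pos h0, hEAval]
        rw [show Qd s * EA s / Qd s = EA s from
          mul_div_cancel_left₀ _ (ne_of_lt (hQdneg s))] at hlim
        rw [hΨs]
        exact hlim
      rw [ContinuousAt, ← nhdsNE_sup_pure s]
      rw [Filter.tendsto_sup]
      exact ⟨hT, tendsto_pure_nhds Ψ s⟩
    · have hev : ∀ᶠ s' in nhds s, Q s' ≠ 0 := (hQder s).continuousAt.eventually_ne h0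
      have heqΨ : Ψ =ᶠ[nhds s] fun s' => Real.log (Pf s') / Q s' := by
        filter_upwards [hev] with s' h'
        simp only [hΨdef, if_neg h']
      exact ContinuousAt.congr ((((hPfder s hs).continuousAt).log
        (ne_of_gt (hPfpos s hs))).div (hQder s).continuousAt h0) heqΨ.symm
  have mono : ∀ a b : ℝ, 0 ≤ a → b ≤ t → a ≤ b →
      (∀ s ∈ Set.Ioo a b, Q s ≠ 0) → Ψ a ≤ Ψ b := by
    intro a b ha hb hab hQne
    have hsub : Set.Icc a b ⊆ Set.Icc 0 t := Set.Icc_subset_Icc ha hb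
    have hmono := monotoneOn_of_deriv_nonneg (convex_Icc a b)
      (fun s hs => (hΨcont s (hsub hs)).continuousWithinAt)
      (fun s hs => by
        rw [interior_Icc] at hs
        obtain ⟨d, hd, _⟩ := hΨder s (hsub (Set.Ioo_subset_Icc_self hs)) (hQne s hs)
        exact hd.differentiableAt.differentiableWithinAt)
      (fun s hs => by
        rw [interior_Icc] at hs
        obtain ⟨d, hd, hd0⟩ := hΨder s (hsub (Set.Ioo_subset_Icc_self hs)) (hQne s hs)
        rw [hd.deriv]
        exact hd0)
    exact hmono (Set.left_mem_Icc.mpr hab) (Set.right_mem_Icc.mpr hab) hab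
  have key : Ψ 0 ≤ Ψ t := by
    by_cases hex : ∃ s₀ ∈ Set.Icc (0:ℝ) t, Q s₀ = 0
    · obtain ⟨s₀, hs₀, hQs₀⟩ := hex
      have h1 : Ψ 0 ≤ Ψ s₀ := mono 0 s₀ le_rfl hs₀.2 hs₀.1 (fun s hsm hc =>
        (ne_of_lt hsm.2) (hQanti.injective (hc.trans hQs₀.symm)))
      have h2 : Ψ s₀ ≤ Ψ t := mono s₀ t hs₀.1 le_rfl hs₀.2 (fun s hsm hc =>
        (ne_of_gt hsm.1) (hQanti.injective (hc.trans hQs₀.symm)))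
      exact le_trans h1 h2
    · push_neg at hex
      exact mono 0 t le_rfl le_rfl htpos.le fun s hsm => hex s (Set.Ioo_subset_Icc_self hsm)
  have hΨval : ∀ s ∈ Set.Icc (0:ℝ) t, Real.exp (Ψ s) = pnorm μ (Q s) (u s) := by
    intro s hs
    by_cases h0 : Q s = 0
    · simp only [hΨdef, pnorm, if_pos h0]
    · simp only [hΨdef, pnorm, if_neg h0]
      have hfold : (pexp μ fun ω => u s ω ^ Q s) = Pf s := by rw [hPfdef]
      rw [hfold, Real.rpow_def_of_pos (hPfpos s hs), mul_one_div]
  have e0 := hΨval 0 (Set.left_mem_Icc.mpr htpos.le)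
  rw [hQ0, hu0] at e0
  have et := hΨval t (Set.right_mem_Icc.mpr htpos.le)
  have hut : u t = heat L t f := by rw [hudef]
  rw [hQt, hut] at et
  rw [← e0, ← et]
  exact Real.exp_le_exp.mpr key

end
end

section
/- Let L = Id − E be the simple generator on (Ω, μ), so that T_t f = E f + e^{−t}(f − E f). Let f : Ω → (0,∞). Then ‖T_t f‖_q ≥ ‖f‖_p holds in each of the following two cases: (i) q < p ≤ 0 and t ≥ log((2−q)/(2−p)); (ii) 0 ≤ q < p < 1 and t ≥ log(((1−q)(2−p)) / ((1−p)(2−q))). -/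
open Real Finset

noncomputable section

variable {Ω : Type*}

section scalarlayer

noncomputable def pf (r x : ℝ) : ℝ := if r = 0 then Real.log x else (x ^ r - 1) / r

lemma pf_one (r : ℝ) : pf r 1 = 0 := by
  unfold pf; split <;> simp

lemma pf_zero' (x : ℝ) : pf 0 x = Real.log x := by simp [pf]

lemma pf_of_ne {r : ℝ} (hr : r ≠ 0) (x : ℝ) : pf r x = (x ^ r - 1) / r := by simp [pf, hr]

/-- Bernoulli, concave case. -/
lemma B2 {x r : ℝ} (hx : 0 ≤ x) (h0 : 0 ≤ r) (h1 : r ≤ 1) : x ^ r ≤ 1 + r * (x - 1) := by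
  have := Real.geom_mean_le_arith_mean2_weighted h0 (by linarith : (0:ℝ) ≤ 1 - r) hx
    (by norm_num : (0:ℝ) ≤ 1) (by ring)
  simpa [Real.one_rpow] using this.trans_eq (by ring)

/-- Bernoulli, convex case. -/
lemma B1 {x r : ℝ} (hx : 0 < x) (h : r ≤ 0 ∨ 1 ≤ r) : 1 + r * (x - 1) ≤ x ^ r := by
  rcases h with h | h
  · have h1 : 1 + r * Real.log x ≤ x ^ r := by
      rw [Real.rpow_def_of_pos hx]
      nlinarith [Real.add_one_le_exp (Real.log x * r)]
    have h2 : r * (x - 1) ≤ r * Real.log x :=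
      mul_le_mul_of_nonpos_left (Real.log_le_sub_one_of_pos hx) h
    linarith
  · have hr0 : 0 < r := by linarith
    have h2 := B2 (Real.rpow_nonneg hx.le r) (by positivity : (0:ℝ) ≤ 1/r)
      (by rw [div_le_one hr0]; linarith)
    rw [← Real.rpow_mul hx.le, mul_one_div, div_self hr0.ne', Real.rpow_one] at h2
    have h3 := mul_le_mul_of_nonneg_left h2 hr0.le
    have hx1 : r * (1 + 1 / r * (x ^ r - 1)) = r + x ^ r - 1 := by field_simp; ring
    nlinarith [h3]

/-- Tangent line inequality for the concave function `pf q` (`q ≤ 1`). -/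
lemma pf_tangent {q x v : ℝ} (hq : q ≤ 1) (hx : 0 < x) (hv : 0 < v) :
    pf q v ≤ pf q x + x ^ (q - 1) * (v - x) := by
  rcases eq_or_ne q 0 with rfl | hq0
  · simp only [pf_zero']
    have h1 : Real.log (v / x) ≤ v / x - 1 := Real.log_le_sub_one_of_pos (by positivity)
    rw [Real.log_div hv.ne' hx.ne'] at h1
    rw [zero_sub, Real.rpow_neg_one]
    have h2 : x⁻¹ * (v - x) = v / x - 1 := by field_simp
    linarith [h2]
  · have hz : (0:ℝ) < v / x := by positivity
    have hzq : (v / x) ^ q = v ^ q / x ^ q := Real.div_rpow hv.le hx.le q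
    have hxq : (0:ℝ) < x ^ q := Real.rpow_pos_of_pos hx q
    have hxq1 : x ^ (q - 1) = x ^ q / x := by
      rw [Real.rpow_sub hx, Real.rpow_one]
    have e : x ^ q * (v / x - 1) = x ^ q / x * (v - x) := by field_simp
    rw [pf_of_ne hq0, pf_of_ne hq0, hxq1]
    rcases lt_or_gt_of_ne hq0 with hneg | hpos
    · have h1 := B1 hz (Or.inl hneg.le)
      rw [hzq] at h1
      have h2 : x ^ q * (1 + q * (v / x - 1)) ≤ v ^ q := by
        calc x ^ q * (1 + q * (v / x - 1)) ≤ x ^ q * (v ^ q / x ^ q) :=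
              mul_le_mul_of_nonneg_left h1 hxq.le
          _ = v ^ q := by field_simp
      rw [div_add' _ _ _ hq0, div_le_div_right_of_neg hneg]
      nlinarith [e]
    · have h1 := B2 hz.le hpos.le hq
      rw [hzq] at h1
      have h2 : v ^ q ≤ x ^ q * (1 + q * (v / x - 1)) := by
        calc v ^ q = x ^ q * (v ^ q / x ^ q) := by field_simp
          _ ≤ x ^ q * (1 + q * (v / x - 1)) := mul_le_mul_of_nonneg_left h1 hxq.le
      rw [div_add' _ _ _ hq0, div_le_div_iff_of_pos_right hpos]
      nlinarith [e]

/-- `pf q x ≤ log x` for `q ≤ 0`. -/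
lemma pf_le_log {x q : ℝ} (hx : 0 < x) (hq : q ≤ 0) : pf q x ≤ Real.log x := by
  rcases eq_or_lt_of_le hq with rfl | hq
  · rw [pf_zero']
  · rw [pf_of_ne hq.ne]
    rw [div_le_iff_of_neg hq]
    have : x ^ q = Real.exp (q * Real.log x) := by
      rw [Real.rpow_def_of_pos hx]; ring_nf
    nlinarith [Real.add_one_le_exp (q * Real.log x), this]

/-- `log x ≤ pf p x` for `0 ≤ p`. -/
lemma log_le_pf {x p : ℝ} (hx : 0 < x) (hp : 0 ≤ p) : Real.log x ≤ pf p x := by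
  rcases eq_or_lt_of_le hp with rfl | hp
  · rw [pf_zero']
  · rw [pf_of_ne hp.ne', le_div_iff₀ hp]
    have : x ^ p = Real.exp (p * Real.log x) := by
      rw [Real.rpow_def_of_pos hx]; ring_nf
    nlinarith [Real.add_one_le_exp (p * Real.log x), this]

/-- `r ↦ pf r x` is monotone. -/
lemma pf_mono {x q p : ℝ} (hx : 0 < x) (hqp : q ≤ p) : pf q x ≤ pf p x := by
  rcases eq_or_lt_of_le hqp with rfl | hlt
  · exact le_refl _
  rcases le_or_gt q 0 with hq0 | hq0
  · rcases le_or_gt 0 p with hp0 | hp0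
    · exact (pf_le_log hx hq0).trans (log_le_pf hx hp0)
    · -- q < p < 0
      have hqn : q < 0 := hlt.trans hp0
      have hz : (0:ℝ) < x ^ p := Real.rpow_pos_of_pos hx p
      have hq1 : (1:ℝ) ≤ q / p := by rw [le_div_iff_of_neg hp0]; linarith
      have h1 := B1 hz (Or.inr hq1)
      rw [← Real.rpow_mul hx.le] at h1
      have e : p * (q / p) = q := by rw [mul_comm]; exact div_mul_cancel₀ q hp0.ne
      rw [e] at h1
      have key := mul_le_mul_of_nonpos_left h1 hp0.le
      have e2 : p * (1 + q / p * (x ^ p - 1)) = p + q * (x ^ p - 1) := by rw [mul_add, mul_one, ← mul_assoc, e]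
      rw [pf_of_ne hqn.ne, pf_of_ne hp0.ne]
      have expand : (x ^ p - 1) / p - (x ^ q - 1) / q
          = ((x ^ p - 1) * q - (x ^ q - 1) * p) / (p * q) := by
        rw [div_sub_div _ _ hp0.ne hqn.ne]; ring_nf
      have num : 0 ≤ (x ^ p - 1) * q - (x ^ q - 1) * p := by nlinarith [key, e2]
      have denom : (0:ℝ) < p * q := mul_pos_of_neg_of_neg hp0 hqn
      have := div_nonneg num denom.le
      linarith [expand ▸ this]
  · -- 0 < q < p
    have hp0 : 0 < p := lt_trans hq0 hlt
    have hz : (0:ℝ) < x ^ q := Real.rpow_pos_of_pos hx q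
    have hr1 : (1:ℝ) ≤ p / q := by rw [le_div_iff₀ hq0]; linarith
    have h1 := B1 hz (Or.inr hr1)
    rw [← Real.rpow_mul hx.le] at h1
    have e : q * (p / q) = p := by rw [mul_comm]; exact div_mul_cancel₀ p hq0.ne'
    rw [e] at h1
    rw [pf_of_ne hq0.ne', pf_of_ne hp0.ne', div_le_div_iff₀ hq0 hp0]
    have key := mul_le_mul_of_nonneg_left h1 hq0.le
    have e2 : q * (1 + p / q * (x ^ q - 1)) = q + p * (x ^ q - 1) := by rw [mul_add, mul_one, ← mul_assoc, e]
    nlinarith [key, e2]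

/-- Derivative of `pf r` at positive points. -/
lemma hasDerivAt_pf {r x : ℝ} (hx : 0 < x) : HasDerivAt (pf r) (x ^ (r - 1)) x := by
  rcases eq_or_ne r 0 with rfl | hr
  · have h := Real.hasDerivAt_log hx.ne'
    have e : x ^ ((0:ℝ) - 1) = x⁻¹ := by rw [zero_sub, Real.rpow_neg_one]
    rw [e]
    exact h.congr_of_eventuallyEq <| by
      filter_upwards [eventually_gt_nhds hx] with y _ using pf_zero' y
  · have h := (Real.hasDerivAt_rpow_const (p := r) (Or.inl hx.ne')).sub_const 1
    have h2 := h.div_const r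
    have e : r * x ^ (r - 1) / r = x ^ (r - 1) := by field_simp
    rw [e] at h2
    exact h2.congr_of_eventuallyEq <| by
      filter_upwards [eventually_gt_nhds hx] with y _ using pf_of_ne hr y

/-- Helper: if `F' = D` on `[lo,hi]`, `D` is antitone there, and `F` is nonneg at both
endpoints, then `F` is nonneg on `[lo,hi]`. -/
lemma nonneg_of_concavelike {F D : ℝ → ℝ} {lo hi : ℝ} (hlohi : lo ≤ hi)
    (hFD : ∀ x ∈ Set.Icc lo hi, HasDerivAt F (D x) x)
    (hD : AntitoneOn D (Set.Icc lo hi))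
    (hFlo : 0 ≤ F lo) (hFhi : 0 ≤ F hi) :
    ∀ b ∈ Set.Icc lo hi, 0 ≤ F b := by
  intro b hb
  have hcont : ContinuousOn F (Set.Icc lo hi) := fun x hx => ((hFD x hx).continuousAt).continuousWithinAt
  rcases le_or_gt 0 (D b) with hDb | hDb
  · -- F monotone on [lo, b]
    have hsub : Set.Icc lo b ⊆ Set.Icc lo hi := Set.Icc_subset_Icc le_rfl hb.2
    have hmono : MonotoneOn F (Set.Icc lo b) := by
      apply monotoneOn_of_deriv_nonneg (convex_Icc lo b) (hcont.mono hsub)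
      · intro x hx
        have hx' : x ∈ Set.Icc lo hi := hsub (interior_subset hx)
        exact (hFD x hx').differentiableAt.differentiableWithinAt
      · intro x hx
        rw [interior_Icc] at hx
        have hx' : x ∈ Set.Icc lo hi := hsub ⟨hx.1.le, hx.2.le⟩
        rw [(hFD x hx').deriv]
        exact le_trans hDb (hD hx' hb (hx.2.le))
    exact le_trans hFlo (hmono ⟨le_rfl, hb.1⟩ ⟨hb.1, le_rfl⟩ hb.1)
  · -- F antitone on [b, hi]
    have hsub : Set.Icc b hi ⊆ Set.Icc lo hi := Set.Icc_subset_Icc hb.1 le_rfl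
    have hanti : AntitoneOn F (Set.Icc b hi) := by
      apply antitoneOn_of_deriv_nonpos (convex_Icc b hi) (hcont.mono hsub)
      · intro x hx
        have hx' : x ∈ Set.Icc lo hi := hsub (interior_subset hx)
        exact (hFD x hx').differentiableAt.differentiableWithinAt
      · intro x hx
        rw [interior_Icc] at hx
        have hx' : x ∈ Set.Icc lo hi := hsub ⟨hx.1.le, hx.2.le⟩
        rw [(hFD x hx').deriv]
        exact le_trans (hD hb hx' hx.1.le) hDb.le
    exact le_trans hFhi (hanti ⟨le_rfl, hb.2⟩ ⟨hb.2, le_rfl⟩ hb.2)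

/-- Helper: if `F' = D` on `(0,∞)`, `D` is monotone, and `F 1 = 0`, `D 1 = 0`,
then `F ≥ 0` on `(0,∞)`. -/
lemma nonneg_of_convexlike {F D : ℝ → ℝ}
    (hFD : ∀ x ∈ Set.Ioi (0:ℝ), HasDerivAt F (D x) x)
    (hD : MonotoneOn D (Set.Ioi 0))
    (hF1 : F 1 = 0) (hD1 : D 1 = 0) : ∀ y ∈ Set.Ioi (0:ℝ), 0 ≤ F y := by
  intro y hy
  have hy0 : (0:ℝ) < y := hy
  have hcont : ∀ s : Set ℝ, s ⊆ Set.Ioi 0 → ContinuousOn F s := fun s hs x hx =>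
    ((hFD x (hs hx)).continuousAt).continuousWithinAt
  rcases le_or_gt 1 y with h1y | h1y
  · have hsub : Set.Icc 1 y ⊆ Set.Ioi (0:ℝ) := fun x hx => lt_of_lt_of_le one_pos hx.1
    have hmono : MonotoneOn F (Set.Icc 1 y) := by
      apply monotoneOn_of_deriv_nonneg (convex_Icc 1 y) (hcont _ hsub)
      · intro x hx
        exact (hFD x (hsub (interior_subset hx))).differentiableAt.differentiableWithinAt
      · intro x hx
        rw [interior_Icc] at hx
        have hx' : x ∈ Set.Ioi (0:ℝ) := hsub ⟨hx.1.le, hx.2.le⟩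
        rw [(hFD x hx').deriv, ← hD1]
        exact hD (Set.mem_Ioi.mpr one_pos) hx' hx.1.le
    calc (0:ℝ) = F 1 := hF1.symm
      _ ≤ F y := hmono ⟨le_rfl, h1y⟩ ⟨h1y, le_rfl⟩ h1y
  · have hsub : Set.Icc y 1 ⊆ Set.Ioi (0:ℝ) := fun x hx => lt_of_lt_of_le hy0 hx.1
    have hanti : AntitoneOn F (Set.Icc y 1) := by
      apply antitoneOn_of_deriv_nonpos (convex_Icc y 1) (hcont _ hsub)
      · intro x hx
        exact (hFD x (hsub (interior_subset hx))).differentiableAt.differentiableWithinAt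
      · intro x hx
        rw [interior_Icc] at hx
        have hx' : x ∈ Set.Ioi (0:ℝ) := hsub ⟨hx.1.le, hx.2.le⟩
        rw [(hFD x hx').deriv, ← hD1]
        exact hD hx' (Set.mem_Ioi.mpr one_pos) hx.2.le
    calc (0:ℝ) = F 1 := hF1.symm
      _ ≤ F y := hanti ⟨le_rfl, h1y.le⟩ ⟨h1y.le, le_rfl⟩ h1y.le

lemma hasDerivAt_log_one_add {x : ℝ} (hx : -1 < x) :
    HasDerivAt (fun y => Real.log (1 + y)) (1 / (1 + x)) x := by
  have h := ((hasDerivAt_id x).const_add 1).log (by linarith : (1:ℝ) + x ≠ 0)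
  simpa using h

lemma V_nonneg {a : ℝ} (ha : 0 < a) (ha1 : a ≤ 1) :
    0 ≤ (a + 1) * (Real.log 2 - Real.log (1 + a)) + a * Real.log a := by
  set V : ℝ → ℝ := fun x => (x + 1) * (Real.log 2 - Real.log (1 + x)) + x * Real.log x with hV
  have hder : ∀ x ∈ Set.Icc a 1, HasDerivAt V (Real.log 2 - Real.log (1 + x) + Real.log x) x := by
    intro x hx
    have hx0 : 0 < x := lt_of_lt_of_le ha hx.1
    have hlog : HasDerivAt (fun y : ℝ => Real.log 2 - Real.log (1 + y)) (-(1 / (1 + x))) x :=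
      (hasDerivAt_log_one_add (show (-1:ℝ) < x by linarith)).const_sub (Real.log 2)
    have h1 := ((hasDerivAt_id x).add_const 1).mul hlog
    have h2 : HasDerivAt (fun y : ℝ => y * Real.log y) (1 * Real.log x + x * x⁻¹) x :=
      (hasDerivAt_id x).mul (Real.hasDerivAt_log hx0.ne')
    have h := h1.add h2
    have h' : HasDerivAt V (1 * (Real.log 2 - Real.log (1 + x)) + (x + 1) * -(1 / (1 + x))
        + (1 * Real.log x + x * x⁻¹)) x := by exact h
    convert h' using 1
    field_simp
    ring
  have hanti : AntitoneOn V (Set.Icc a 1) := by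
    apply antitoneOn_of_deriv_nonpos (convex_Icc a 1)
      (fun x hx => ((hder x hx).continuousAt).continuousWithinAt)
    · intro x hx
      exact (hder x (interior_subset hx)).differentiableAt.differentiableWithinAt
    · intro x hx
      rw [interior_Icc] at hx
      obtain ⟨hxa, hx1⟩ := hx
      have hx0 : 0 < x := lt_trans ha hxa
      rw [(hder x ⟨hxa.le, hx1.le⟩).deriv]
      have heq : Real.log 2 + Real.log x = Real.log (2 * x) := (Real.log_mul two_ne_zero hx0.ne').symm
      have hle : Real.log (2 * x) ≤ Real.log (1 + x) :=
        Real.log_le_log (by linarith) (by linarith)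
      linarith
  have hV1 : V 1 = 0 := by
    have : Real.log (1 + 1) = Real.log 2 := by norm_num
    simp [hV, this]
  have := hanti (Set.mem_Icc.mpr ⟨le_rfl, ha1⟩) (Set.mem_Icc.mpr ⟨ha1, le_rfl⟩) ha1
  rw [hV1] at this
  exact this

lemma w_nonneg {a b : ℝ} (ha : 0 < a) (hab : a ≤ b) (hb1 : b ≤ 1) :
    0 ≤ (a + b) * (Real.log (1 + b) - Real.log (1 + a)) + a * Real.log a - b * Real.log b := by
  set F : ℝ → ℝ := fun x =>
    (a + x) * (Real.log (1 + x) - Real.log (1 + a)) + a * Real.log a - x * Real.log x with hF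
  set D : ℝ → ℝ := fun x =>
    (Real.log (1 + x) - Real.log (1 + a)) + (a + x) / (1 + x) - Real.log x - 1 with hD
  have hFD : ∀ x ∈ Set.Icc a 1, HasDerivAt F (D x) x := by
    intro x hx
    have hx0 : 0 < x := lt_of_lt_of_le ha hx.1
    have h1 : HasDerivAt (fun y : ℝ => (a + y) * (Real.log (1 + y) - Real.log (1 + a)))
        (1 * (Real.log (1 + x) - Real.log (1 + a)) + (a + x) * (1 / (1 + x))) x :=
      ((hasDerivAt_id x).const_add a).mul
        ((hasDerivAt_log_one_add (by linarith)).sub_const (Real.log (1 + a)))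
    have h2 : HasDerivAt (fun y : ℝ => y * Real.log y) (1 * Real.log x + x * x⁻¹) x :=
      (hasDerivAt_id x).mul (Real.hasDerivAt_log hx0.ne')
    have h := (h1.add_const (a * Real.log a)).sub h2
    have e : 1 * (Real.log (1 + x) - Real.log (1 + a)) + (a + x) * (1 / (1 + x))
        - (1 * Real.log x + x * x⁻¹) = D x := by
      rw [hD]; field_simp; ring
    rw [e] at h
    exact h
  have hDanti : AntitoneOn D (Set.Icc a 1) := by
    have hder : ∀ x ∈ Set.Icc a 1, HasDerivAt D
        (1 / (1 + x) + (1 * (1 + x) - (a + x) * 1) / (1 + x) ^ 2 - x⁻¹) x := by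
      intro x hx
      have hx0 : 0 < x := lt_of_lt_of_le ha hx.1
      have h1 : HasDerivAt (fun y : ℝ => Real.log (1 + y) - Real.log (1 + a)) (1 / (1 + x)) x :=
        (hasDerivAt_log_one_add (by linarith)).sub_const _
      have h2 : HasDerivAt (fun y : ℝ => (a + y) / (1 + y))
          ((1 * (1 + x) - (a + x) * 1) / (1 + x) ^ 2) x :=
        ((hasDerivAt_id x).const_add a).div ((hasDerivAt_id x).const_add 1) (by linarith)
      exact ((h1.add h2).sub (Real.hasDerivAt_log hx0.ne')).sub_const 1
    apply antitoneOn_of_deriv_nonpos (convex_Icc a 1)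
      (fun x hx => ((hder x hx).continuousAt).continuousWithinAt)
    · intro x hx
      exact (hder x (interior_subset hx)).differentiableAt.differentiableWithinAt
    · intro x hx
      rw [interior_Icc] at hx
      obtain ⟨hxa, hx1⟩ := hx
      have hx0 : 0 < x := lt_trans ha hxa
      rw [(hder x ⟨hxa.le, hx1.le⟩).deriv]
      have h1x : (0:ℝ) < 1 + x := by linarith
      rw [sub_nonpos, inv_eq_one_div, div_add_div _ _ h1x.ne' (by positivity : ((1+x)^2 : ℝ) ≠ 0),
        div_le_div_iff₀ (by positivity) hx0]
      nlinarith [sq_nonneg (1 + x), mul_pos h1x h1x, mul_pos hx0 h1x]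
  have hFa : 0 ≤ F a := by simp [hF]
  have hF1 : 0 ≤ F 1 := by
    have := V_nonneg ha (hab.trans hb1)
    simp only [hF, Real.log_one, mul_zero, sub_zero]
    calc (0:ℝ) ≤ (a + 1) * (Real.log 2 - Real.log (1 + a)) + a * Real.log a := this
      _ = (a + 1) * (Real.log (1 + 1) - Real.log (1 + a)) + a * Real.log a := by norm_num
  exact nonneg_of_concavelike (hab.trans hb1) hFD hDanti hFa hF1 b ⟨hab, hb1⟩

/-- Reduction of the second-derivative inequality (K) to a constant inequality, via AM-GM. -/
lemma K_of_const {p q s lam : ℝ} (hq1 : q < 1) (hp1 : p < 1) (hs : 0 < s) (hs1 : s < 1)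
    (hlam : 0 < lam) (hlam1 : lam < 1) (hlam_eq : lam * (2 - q) = 2 - p)
    (hC : (1 - q) * s ^ 2 ≤
      (1 - p) * (((1 - s) / (1 - lam)) ^ (1 - lam) * (s / lam) ^ lam) ^ (2 - q))
    {x : ℝ} (hx : 0 < x) :
    (1 - q) * s ^ 2 * (1 - s + s * x) ^ (q - 2) ≤ (1 - p) * x ^ (p - 2) := by
  have h1s : (0:ℝ) < 1 - s := by linarith
  have h1l : (0:ℝ) < 1 - lam := by linarith
  have hu : (0:ℝ) < 1 - s + s * x := by nlinarith
  set C : ℝ := ((1 - s) / (1 - lam)) ^ (1 - lam) * (s / lam) ^ lam with hCdef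
  have hCpos : 0 < C :=
    mul_pos (Real.rpow_pos_of_pos (div_pos h1s h1l) _) (Real.rpow_pos_of_pos (div_pos hs hlam) _)
  -- AM-GM
  have hag : C * x ^ lam ≤ 1 - s + s * x := by
    have h := Real.geom_mean_le_arith_mean2_weighted h1l.le hlam.le
      (div_pos h1s h1l).le (by positivity : (0:ℝ) ≤ s * x / lam) (by ring)
    have e1 : (1 - lam) * ((1 - s) / (1 - lam)) = 1 - s := by field_simp
    have e2 : lam * (s * x / lam) = s * x := by field_simp
    have e3 : (s * x / lam) ^ lam = (s / lam) ^ lam * x ^ lam := by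
      rw [show s * x / lam = s / lam * x by ring,
        Real.mul_rpow (by positivity) hx.le]
    rw [e1, e2, e3] at h
    calc C * x ^ lam = ((1 - s) / (1 - lam)) ^ (1 - lam) * ((s / lam) ^ lam * x ^ lam) := by
          rw [hCdef]; ring
      _ ≤ 1 - s + s * x := h
  have hxlam : (0:ℝ) < x ^ lam := Real.rpow_pos_of_pos hx _
  have hupow : C ^ (2 - q) * x ^ (2 - p) ≤ (1 - s + s * x) ^ (2 - q) := by
    have h := Real.rpow_le_rpow (by positivity) hag (by linarith : (0:ℝ) ≤ 2 - q)
    rwa [Real.mul_rpow hCpos.le hxlam.le, ← Real.rpow_mul hx.le, hlam_eq] at h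
  have hx2p : (0:ℝ) < x ^ (2 - p) := Real.rpow_pos_of_pos hx _
  have hu2q : (0:ℝ) < (1 - s + s * x) ^ (2 - q) := Real.rpow_pos_of_pos hu _
  have hq2 : (1 - s + s * x) ^ (q - 2) = ((1 - s + s * x) ^ (2 - q))⁻¹ := by
    rw [show q - 2 = -(2 - q) by ring, Real.rpow_neg hu.le]
  have hp2 : x ^ (p - 2) = (x ^ (2 - p))⁻¹ := by
    rw [show p - 2 = -(2 - p) by ring, Real.rpow_neg hx.le]
  rw [hq2, hp2, ← div_eq_mul_inv, ← div_eq_mul_inv, div_le_div_iff₀ hu2q hx2p]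
  calc (1 - q) * s ^ 2 * x ^ (2 - p) ≤ (1 - p) * C ^ (2 - q) * x ^ (2 - p) :=
        mul_le_mul_of_nonneg_right hC hx2p.le
    _ = (1 - p) * (C ^ (2 - q) * x ^ (2 - p)) := by ring
    _ ≤ (1 - p) * (1 - s + s * x) ^ (2 - q) :=
        mul_le_mul_of_nonneg_left hupow (by linarith : (0:ℝ) ≤ 1 - p)

/-- Constant inequality, case (i): here `s = lam = (2-p)/(2-q)`. -/
lemma const1 {p q : ℝ} (hqp : q < p) (hp0 : p ≤ 0) :
    (1 - q) * ((2 - p) / (2 - q)) ^ 2 ≤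
      (1 - p) * (((1 - (2 - p) / (2 - q)) / (1 - (2 - p) / (2 - q))) ^ (1 - (2 - p) / (2 - q))
        * (((2 - p) / (2 - q)) / ((2 - p) / (2 - q))) ^ ((2 - p) / (2 - q))) ^ (2 - q) := by
  have h2q : (0:ℝ) < 2 - q := by linarith
  have h2p : (0:ℝ) < 2 - p := by linarith
  have hlam1 : (2 - p) / (2 - q) < 1 := by rw [div_lt_one h2q]; linarith
  have hne : (1:ℝ) - (2 - p) / (2 - q) ≠ 0 := by
    intro h; rw [sub_eq_zero] at h; rw [← h] at hlam1; exact lt_irrefl _ hlam1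
  have hlamne : (2 - p) / (2 - q) ≠ 0 := by positivity
  rw [div_self hne, div_self hlamne, Real.one_rpow, Real.one_rpow, one_mul, Real.one_rpow,
    mul_one]
  -- (1-q) * ((2-p)/(2-q))^2 ≤ 1-p
  rw [div_pow, ← mul_div_assoc, div_le_iff₀ (by positivity)]
  nlinarith [mul_nonneg (sub_nonneg.mpr hqp.le) (by nlinarith : 0 ≤ p * q - p - q)]

/-- Constant inequality, case (ii): `s = (1-p)(2-q)/((1-q)(2-p))`, `lam = (2-p)/(2-q)`. -/
lemma const2 {p q : ℝ} (hq : 0 ≤ q) (hqp : q < p) (hp1 : p < 1) :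
    (1 - q) * ((1 - p) * (2 - q) / ((1 - q) * (2 - p))) ^ 2 ≤
      (1 - p) * (((1 - (1 - p) * (2 - q) / ((1 - q) * (2 - p))) / (1 - (2 - p) / (2 - q)))
          ^ (1 - (2 - p) / (2 - q))
        * (((1 - p) * (2 - q) / ((1 - q) * (2 - p))) / ((2 - p) / (2 - q))) ^ ((2 - p) / (2 - q)))
        ^ (2 - q) := by
  set a : ℝ := 1 - p with hadef
  set b : ℝ := 1 - q with hbdef
  have ha : 0 < a := by simp only [hadef]; linarith
  have hab : a < b := by simp only [hadef, hbdef]; linarith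
  have hb1 : b ≤ 1 := by simp only [hbdef]; linarith
  have hb : 0 < b := ha.trans hab
  have h1a : (0:ℝ) < 1 + a := by linarith
  have h1b : (0:ℝ) < 1 + b := by linarith
  have hba : (0:ℝ) < b - a := by linarith
  have e2p : 2 - p = 1 + a := by simp only [hadef]; ring
  have e2q : 2 - q = 1 + b := by simp only [hbdef]; ring
  set A : ℝ := (1 + b) / (b * (1 + a)) with hAdef
  set B : ℝ := a * (1 + b) ^ 2 / (b * (1 + a) ^ 2) with hBdef
  have hApos : 0 < A := div_pos h1b (by positivity)
  have hBpos : 0 < B := div_pos (by positivity) (by positivity)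
  have eS : (1 - p) * (2 - q) / ((1 - q) * (2 - p)) = a * (1 + b) / (b * (1 + a)) := by
    rw [← hadef, ← hbdef, e2p, e2q]
  have eA : (1 - (1 - p) * (2 - q) / ((1 - q) * (2 - p))) / (1 - (2 - p) / (2 - q)) = A := by
    rw [← hadef, ← hbdef, e2p, e2q, hAdef]
    rw [div_eq_div_iff]
    · field_simp
      ring
    · rw [sub_ne_zero]
      intro h
      have : a * (1 + b) = b * (1 + a) := by
        field_simp at h
        linarith [h]
      nlinarith
    · positivity
  have eB : ((1 - p) * (2 - q) / ((1 - q) * (2 - p))) / ((2 - p) / (2 - q)) = B := by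
    rw [← hadef, ← hbdef, e2p, e2q, hBdef]
    field_simp
  have eL : (1 - q) * ((1 - p) * (2 - q) / ((1 - q) * (2 - p))) ^ 2 = a * B := by
    rw [← hadef, ← hbdef, e2p, e2q, hBdef]
    field_simp
  have ew1 : 1 - (2 - p) / (2 - q) = (b - a) / (1 + b) := by
    rw [e2p, e2q, eq_div_iff h1b.ne', sub_mul, one_mul, div_mul_cancel₀ _ h1b.ne']
    ring
  have ew2 : (2 - p) / (2 - q) = (1 + a) / (1 + b) := by rw [e2p, e2q]
  rw [eA, eB, eL, ew1, ew2, e2q]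
  have hmul : (A ^ ((b - a) / (1 + b)) * B ^ ((1 + a) / (1 + b))) ^ (1 + b)
      = A ^ (b - a) * B ^ (1 + a) := by
    rw [Real.mul_rpow (Real.rpow_nonneg hApos.le _) (Real.rpow_nonneg hBpos.le _),
      ← Real.rpow_mul hApos.le, ← Real.rpow_mul hBpos.le,
      div_mul_cancel₀ _ h1b.ne', div_mul_cancel₀ _ h1b.ne']
  rw [hmul]
  have hBsplit : B ^ ((1:ℝ) + a) = B * B ^ a := by
    rw [Real.rpow_add hBpos, Real.rpow_one]
  rw [hBsplit]
  -- key : 1 ≤ A^(b-a) * B^a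
  have hlogA : Real.log A = Real.log (1 + b) - (Real.log b + Real.log (1 + a)) := by
    rw [hAdef, Real.log_div h1b.ne' (by positivity), Real.log_mul hb.ne' h1a.ne']
  have hlogB : Real.log B
      = Real.log a + 2 * Real.log (1 + b) - (Real.log b + 2 * Real.log (1 + a)) := by
    rw [hBdef, Real.log_div (by positivity) (by positivity), Real.log_mul ha.ne' (by positivity),
      Real.log_mul hb.ne' (by positivity), Real.log_pow, Real.log_pow]
    push_cast
    ring
  have hw := w_nonneg ha hab.le hb1
  have hABpos : 0 < A ^ (b - a) * B ^ a :=
    mul_pos (Real.rpow_pos_of_pos hApos _) (Real.rpow_pos_of_pos hBpos _)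
  have hlog : 0 ≤ Real.log (A ^ (b - a) * B ^ a) := by
    rw [Real.log_mul (Real.rpow_pos_of_pos hApos _).ne' (Real.rpow_pos_of_pos hBpos _).ne',
      Real.log_rpow hApos, Real.log_rpow hBpos, hlogA, hlogB]
    nlinarith [hw]
  have hkey : 1 ≤ A ^ (b - a) * B ^ a := by
    calc (1:ℝ) = Real.exp 0 := Real.exp_zero.symm
      _ ≤ Real.exp (Real.log (A ^ (b - a) * B ^ a)) := Real.exp_le_exp.mpr hlog
      _ = A ^ (b - a) * B ^ a := Real.exp_log hABpos
  calc a * B = a * B * 1 := (mul_one _).symm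
    _ ≤ a * B * (A ^ (b - a) * B ^ a) :=
        mul_le_mul_of_nonneg_left hkey (by positivity)
    _ = a * (A ^ (b - a) * (B * B ^ a)) := by ring

/-- The core function `G(y) = φ_q(1-s+sy) - φ_p(y) - (s-1)(y-1)` is nonneg at the critical `s`. -/
lemma G_nonneg_crit {p q s : ℝ} (hqp : q < p) (hp1 : p < 1) (hs : 0 < s) (hs1 : s ≤ 1)
    (hK : ∀ x : ℝ, 0 < x → (1 - q) * s ^ 2 * (1 - s + s * x) ^ (q - 2) ≤ (1 - p) * x ^ (p - 2)) :
    ∀ y : ℝ, 0 < y → 0 ≤ pf q (1 - s + s * y) - pf p y - (s - 1) * (y - 1) := by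
  have hupos : ∀ y : ℝ, 0 < y → 0 < 1 - s + s * y := by
    intro y hy; nlinarith
  have haff : ∀ y : ℝ, HasDerivAt (fun z : ℝ => 1 - s + s * z) s y := by
    intro y
    simpa using ((hasDerivAt_id y).const_mul s).const_add (1 - s)
  set D : ℝ → ℝ := fun y => (1 - s + s * y) ^ (q - 1) * s - y ^ (p - 1) - (s - 1) with hDdef
  have hFD : ∀ y ∈ Set.Ioi (0:ℝ), HasDerivAt
      (fun z => pf q (1 - s + s * z) - pf p z - (s - 1) * (z - 1)) (D y) y := by
    intro y hy
    have hy0 : (0:ℝ) < y := hy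
    have h1 : HasDerivAt (fun z : ℝ => pf q (1 - s + s * z))
        ((1 - s + s * y) ^ (q - 1) * s) y :=
      by have h := (hasDerivAt_pf (r := q) (hupos y hy0)).comp y (haff y); exact h
    have h2 : HasDerivAt (fun z : ℝ => pf p z) (y ^ (p - 1)) y := hasDerivAt_pf hy0
    have h3 : HasDerivAt (fun z : ℝ => (s - 1) * (z - 1)) (s - 1) y := by
      simpa using ((hasDerivAt_id y).sub_const 1).const_mul (s - 1)
    exact (h1.sub h2).sub h3
  have hDmono : MonotoneOn D (Set.Ioi (0:ℝ)) := by
    have hder : ∀ x ∈ Set.Ioi (0:ℝ), HasDerivAt D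
        ((q - 1) * (1 - s + s * x) ^ (q - 2) * s * s - (p - 1) * x ^ (p - 2)) x := by
      intro x hx
      have hx0 : (0:ℝ) < x := hx
      have hu := hupos x hx0
      have h1 : HasDerivAt (fun z : ℝ => (1 - s + s * z) ^ (q - 1))
          ((q - 1) * (1 - s + s * x) ^ (q - 1 - 1) * s) x :=
        by have h := (Real.hasDerivAt_rpow_const (p := q - 1) (Or.inl hu.ne')).comp x (haff x); exact h
      have h2 : HasDerivAt (fun z : ℝ => z ^ (p - 1)) ((p - 1) * x ^ (p - 1 - 1)) x :=
        Real.hasDerivAt_rpow_const (Or.inl hx0.ne')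
      have h := (h1.mul_const s).sub h2 |>.sub_const (s - 1)
      have e1 : q - 1 - 1 = q - 2 := by ring
      have e2 : p - 1 - 1 = p - 2 := by ring
      rw [e1, e2] at h
      exact h.congr_deriv (by ring)
    apply monotoneOn_of_deriv_nonneg (convex_Ioi 0)
      (fun x hx => ((hder x hx).continuousAt).continuousWithinAt)
    · intro x hx
      rw [interior_Ioi] at hx
      exact (hder x hx).differentiableAt.differentiableWithinAt
    · intro x hx
      rw [interior_Ioi] at hx
      have := hK x hx
      rw [(hder x hx).deriv]
      nlinarith [this]
  have hF1 : pf q (1 - s + s * 1) - pf p 1 - (s - 1) * (1 - 1) = 0 := by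
    rw [show 1 - s + s * 1 = 1 by ring, pf_one, pf_one]; ring
  have hD1 : D 1 = 0 := by
    rw [hDdef]; simp [show 1 - s + s * 1 = 1 by ring, Real.one_rpow]
  intro y hy
  exact nonneg_of_convexlike hFD hDmono hF1 hD1 y hy

/-- Monotonicity of `G` in `s` (downwards): the inequality for `σ` implies it for `s ≤ σ`. -/
lemma G_mono_s {q s σ y : ℝ} (hq1 : q ≤ 1) (hs : 0 < s) (hsσ : s ≤ σ) (hσ1 : σ ≤ 1)
    (hy : 0 < y) :
    pf q (1 - σ + σ * y) - (σ - 1) * (y - 1) ≤ pf q (1 - s + s * y) - (s - 1) * (y - 1) := by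
  have hu : (0:ℝ) < 1 - s + s * y := by nlinarith
  have hustar : (0:ℝ) < 1 - σ + σ * y := by nlinarith
  have htan := pf_tangent hq1 hu hustar
  have hdiff : (1 - σ + σ * y) - (1 - s + s * y) = (σ - s) * (y - 1) := by ring
  have hsign : (1 - s + s * y) ^ (q - 1) * ((1 - σ + σ * y) - (1 - s + s * y))
      ≤ (1 - σ + σ * y) - (1 - s + s * y) := by
    rcases le_or_gt 1 y with h1y | h1y
    · have hu1 : 1 ≤ 1 - s + s * y := by nlinarith
      have hle1 : (1 - s + s * y) ^ (q - 1) ≤ 1 :=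
        Real.rpow_le_one_of_one_le_of_nonpos hu1 (by linarith)
      have hd0 : 0 ≤ (1 - σ + σ * y) - (1 - s + s * y) := by nlinarith
      nlinarith
    · have hu1 : 1 - s + s * y ≤ 1 := by nlinarith
      have hge1 : 1 ≤ (1 - s + s * y) ^ (q - 1) :=
        Real.one_le_rpow_of_pos_of_le_one_of_nonpos hu hu1 (by linarith)
      have hd0 : (1 - σ + σ * y) - (1 - s + s * y) ≤ 0 := by nlinarith
      nlinarith
  nlinarith [htan, hsign]

/-- Master pointwise inequality. -/
lemma master {p q s σ : ℝ} (hqp : q < p) (hp1 : p < 1) (hs : 0 < s) (hsσ : s ≤ σ) (hσ1 : σ ≤ 1)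
    (hK : ∀ x : ℝ, 0 < x → (1 - q) * σ ^ 2 * (1 - σ + σ * x) ^ (q - 2) ≤ (1 - p) * x ^ (p - 2))
    {y : ℝ} (hy : 0 < y) :
    pf p y + (s - 1) * (y - 1) ≤ pf q (1 - s + s * y) := by
  have h1 := G_nonneg_crit hqp hp1 (hs.trans_le hsσ) hσ1 hK y hy
  have h2 := G_mono_s (by linarith : q ≤ 1) hs hsσ hσ1 hy
  linarith

/-- The (K) inequality, case (i). -/
lemma K1 {p q : ℝ} (hqp : q < p) (hp0 : p ≤ 0) :
    ∀ x : ℝ, 0 < x → (1 - q) * ((2 - p) / (2 - q)) ^ 2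
      * (1 - (2 - p) / (2 - q) + (2 - p) / (2 - q) * x) ^ (q - 2) ≤ (1 - p) * x ^ (p - 2) := by
  intro x hx
  have h2q : (0:ℝ) < 2 - q := by linarith
  have h2p : (0:ℝ) < 2 - p := by linarith
  exact K_of_const (by linarith) (by linarith) (by positivity)
    (by rw [div_lt_one h2q]; linarith)
    (by positivity) (by rw [div_lt_one h2q]; linarith)
    (div_mul_cancel₀ _ h2q.ne') (const1 hqp hp0) hx

/-- The (K) inequality, case (ii). -/
lemma K2 {p q : ℝ} (hq : 0 ≤ q) (hqp : q < p) (hp1 : p < 1) :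
    ∀ x : ℝ, 0 < x → (1 - q) * ((1 - p) * (2 - q) / ((1 - q) * (2 - p))) ^ 2
      * (1 - (1 - p) * (2 - q) / ((1 - q) * (2 - p))
          + (1 - p) * (2 - q) / ((1 - q) * (2 - p)) * x) ^ (q - 2)
      ≤ (1 - p) * x ^ (p - 2) := by
  intro x hx
  have h2q : (0:ℝ) < 2 - q := by linarith
  have h2p : (0:ℝ) < 2 - p := by linarith
  have h1p : (0:ℝ) < 1 - p := by linarith
  have h1q : (0:ℝ) < 1 - q := by linarith
  have hslt : (1 - p) * (2 - q) / ((1 - q) * (2 - p)) < 1 := by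
    rw [div_lt_one (by positivity)]; nlinarith
  exact K_of_const (by linarith) hp1 (by positivity) hslt
    (by positivity) (by rw [div_lt_one h2q]; linarith)
    (div_mul_cancel₀ _ h2q.ne') (const2 hq hqp hp1) hx

end scalarlayer

section problayer

variable {Ω : Type*} [Fintype Ω]

lemma pexp_mono (μ : Ω → ℝ) (hμ : ∀ ω, 0 ≤ μ ω) {g h : Ω → ℝ} (hgh : ∀ ω, g ω ≤ h ω) :
    pexp μ g ≤ pexp μ h :=
  Finset.sum_le_sum fun ω _ => mul_le_mul_of_nonneg_left (hgh ω) (hμ ω)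

lemma pexp_pos (μ : Ω → ℝ) (hμ : ∀ ω, 0 < μ ω) [Nonempty Ω] {g : Ω → ℝ}
    (hg : ∀ ω, 0 < g ω) : 0 < pexp μ g :=
  Finset.sum_pos (fun ω _ => mul_pos (hμ ω) (hg ω)) Finset.univ_nonempty

lemma pexp_scale (μ : Ω → ℝ) (g : Ω → ℝ) (c : ℝ) :
    pexp μ (fun ω => c * g ω) = c * pexp μ g := by
  unfold pexp
  rw [Finset.mul_sum]
  exact Finset.sum_congr rfl fun ω _ => by ring

lemma pexp_pf (μ : Ω → ℝ) (hμ1 : ∑ ω, μ ω = 1) {r : ℝ} (hr : r ≠ 0) (g : Ω → ℝ) :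
    pexp μ (fun ω => pf r (g ω)) = (pexp μ (fun ω => g ω ^ r) - 1) / r := by
  simp only [pf_of_ne hr]
  unfold pexp
  rw [eq_div_iff hr]
  calc (∑ ω, μ ω * ((g ω ^ r - 1) / r)) * r = ∑ ω, (μ ω * g ω ^ r - μ ω) := by
        rw [Finset.sum_mul]
        exact Finset.sum_congr rfl fun ω _ => by field_simp
    _ = (∑ ω, μ ω * g ω ^ r) - ∑ ω, μ ω := Finset.sum_sub_distrib _ _
    _ = (∑ ω, μ ω * g ω ^ r) - 1 := by rw [hμ1]

lemma pnorm_pos (μ : Ω → ℝ) (hμ : ∀ ω, 0 < μ ω) [Nonempty Ω] (r : ℝ) {g : Ω → ℝ}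
    (hg : ∀ ω, 0 < g ω) : 0 < pnorm μ r g := by
  unfold pnorm
  split
  · exact Real.exp_pos _
  · exact Real.rpow_pos_of_pos (pexp_pos μ hμ fun ω => Real.rpow_pos_of_pos (hg ω) r) _

lemma pf_pnorm (μ : Ω → ℝ) (hμ : ∀ ω, 0 < μ ω) (hμ1 : ∑ ω, μ ω = 1) [Nonempty Ω]
    (r : ℝ) {g : Ω → ℝ} (hg : ∀ ω, 0 < g ω) :
    pf r (pnorm μ r g) = pexp μ (fun ω => pf r (g ω)) := by
  by_cases hr : r = 0
  · subst hr
    simp [pnorm, pf_zero', Real.log_exp]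
  · have hP : 0 < pexp μ (fun ω => g ω ^ r) :=
      pexp_pos μ hμ fun ω => Real.rpow_pos_of_pos (hg ω) r
    rw [pnorm, if_neg hr, pf_of_ne hr, pexp_pf μ hμ1 hr g,
      ← Real.rpow_mul hP.le, one_div, inv_mul_cancel₀ hr, Real.rpow_one]

lemma pf_le_pf_left {r x y : ℝ} (hx : 0 < x) (hy : 0 < y) (h : pf r x ≤ pf r y) : x ≤ y := by
  by_cases hr : r = 0
  · subst hr
    rw [pf_zero', pf_zero'] at h
    exact (Real.log_le_log_iff hx hy).mp h
  · rw [pf_of_ne hr, pf_of_ne hr] at h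
    rcases lt_or_gt_of_ne hr with hneg | hpos
    · have h2 : y ^ r ≤ x ^ r := by
        rw [div_le_div_right_of_neg hneg] at h
        linarith
      have := (Real.le_rpow_inv_iff_of_neg hx (Real.rpow_pos_of_pos hy r) hneg).mpr h2
      rwa [← Real.rpow_mul hy.le, mul_inv_cancel₀ hr, Real.rpow_one] at this
    · have h2 : x ^ r ≤ y ^ r := by
        rw [div_le_div_iff_of_pos_right hpos] at h
        linarith
      have h3 := Real.rpow_le_rpow (Real.rpow_nonneg hx.le r) h2
        (le_of_lt (by positivity : (0:ℝ) < 1 / r))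
      rwa [← Real.rpow_mul hx.le, ← Real.rpow_mul hy.le, mul_one_div, div_self hr,
        Real.rpow_one, Real.rpow_one] at h3

lemma pnorm_scale (μ : Ω → ℝ) (hμ : ∀ ω, 0 ≤ μ ω) (hμ1 : ∑ ω, μ ω = 1) (r : ℝ) {c : ℝ}
    (hc : 0 < c) {g : Ω → ℝ} (hg : ∀ ω, 0 < g ω) :
    pnorm μ r (fun ω => c * g ω) = c * pnorm μ r g := by
  unfold pnorm
  by_cases hr : r = 0
  · rw [if_pos hr, if_pos hr]
    have e : (fun ω => Real.log (c * g ω)) = fun ω => Real.log (g ω) + Real.log c :=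
      funext fun ω => by rw [Real.log_mul hc.ne' (hg ω).ne']; ring
    have e2 : pexp μ (fun ω => Real.log (g ω) + Real.log c)
        = pexp μ (fun ω => Real.log (g ω)) + Real.log c := by
      unfold pexp
      calc ∑ ω, μ ω * (Real.log (g ω) + Real.log c)
          = ∑ ω, (μ ω * Real.log (g ω) + Real.log c * μ ω) :=
            Finset.sum_congr rfl fun ω _ => by ring
        _ = (∑ ω, μ ω * Real.log (g ω)) + Real.log c * ∑ ω, μ ω := by
            rw [Finset.sum_add_distrib, Finset.mul_sum]
        _ = (∑ ω, μ ω * Real.log (g ω)) + Real.log c := by rw [hμ1, mul_one]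
    rw [e, e2, Real.exp_add, Real.exp_log hc, mul_comm]
  · rw [if_neg hr, if_neg hr]
    have e : (fun ω => (c * g ω) ^ r) = fun ω => c ^ r * g ω ^ r :=
      funext fun ω => Real.mul_rpow hc.le (hg ω).le
    rw [e, pexp_scale]
    have hP : 0 ≤ pexp μ (fun ω => g ω ^ r) :=
      Finset.sum_nonneg fun ω _ => mul_nonneg (hμ ω) (Real.rpow_nonneg (hg ω).le r)
    rw [Real.mul_rpow (Real.rpow_nonneg hc.le r) hP, ← Real.rpow_mul hc.le, mul_one_div,
      div_self hr, Real.rpow_one]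

/-- Normalized form of the main theorem. -/
lemma main_norm (μ : Ω → ℝ) (hμ : ∀ ω, 0 < μ ω) (hμ1 : ∑ ω, μ ω = 1) [Nonempty Ω]
    {Y : Ω → ℝ} (hY : ∀ ω, 0 < Y ω) (hEY : pexp μ Y = 1)
    {p q s σ : ℝ} (hqp : q < p) (hp1 : p < 1) (hs : 0 < s) (hsσ : s ≤ σ) (hσ1 : σ ≤ 1)
    (hK : ∀ x : ℝ, 0 < x →
      (1 - q) * σ ^ 2 * (1 - σ + σ * x) ^ (q - 2) ≤ (1 - p) * x ^ (p - 2)) :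
    pnorm μ p Y ≤ pnorm μ q (fun ω => 1 - s + s * Y ω) := by
  have hμnn : ∀ ω, 0 ≤ μ ω := fun ω => (hμ ω).le
  have hs1 : s ≤ 1 := hsσ.trans hσ1
  have hUpos : ∀ ω, 0 < 1 - s + s * Y ω := fun ω => by nlinarith [hY ω]
  set b := pexp μ (fun ω => pf p (Y ω)) with hbdef
  set a := pexp μ (fun ω => pf q (1 - s + s * Y ω)) with hadef
  have hba : b ≤ a := by
    have h1 : pexp μ (fun ω => pf p (Y ω) + (s - 1) * (Y ω - 1)) ≤ a :=
      pexp_mono μ hμnn fun ω => master hqp hp1 hs hsσ hσ1 hK (hY ω)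
    have h2 : pexp μ (fun ω => pf p (Y ω) + (s - 1) * (Y ω - 1))
        = b + (s - 1) * (pexp μ Y - 1) := by
      unfold pexp
      calc ∑ ω, μ ω * (pf p (Y ω) + (s - 1) * (Y ω - 1))
          = ∑ ω, (μ ω * pf p (Y ω) + (s - 1) * (μ ω * Y ω) - (s - 1) * μ ω) :=
            Finset.sum_congr rfl fun ω _ => by ring
        _ = (∑ ω, μ ω * pf p (Y ω)) + (s - 1) * (∑ ω, μ ω * Y ω) - (s - 1) * ∑ ω, μ ω := by
            rw [Finset.sum_sub_distrib, Finset.sum_add_distrib, Finset.mul_sum, Finset.mul_sum]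
        _ = b + (s - 1) * (pexp μ Y - 1) := by rw [hμ1]; unfold pexp at hbdef ⊢; rw [hbdef]; ring
    rw [h2, hEY] at h1
    simpa using h1
  have hXpos : 0 < pnorm μ p Y := pnorm_pos μ hμ p hY
  have hNpos : 0 < pnorm μ q (fun ω => 1 - s + s * Y ω) := pnorm_pos μ hμ q hUpos
  have hX : pf p (pnorm μ p Y) = b := pf_pnorm μ hμ hμ1 p hY
  have hU : pf q (pnorm μ q (fun ω => 1 - s + s * Y ω)) = a := pf_pnorm μ hμ hμ1 q hUpos
  apply pf_le_pf_left (r := q) hXpos hNpos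
  calc pf q (pnorm μ p Y) ≤ pf p (pnorm μ p Y) := pf_mono hXpos hqp.le
    _ = b := hX
    _ ≤ a := hba
    _ = pf q (pnorm μ q (fun ω => 1 - s + s * Y ω)) := hU.symm

end problayer

/-- strong reverse hypercontractivity for the simple semigroup
`T_t f = E f + e^{-t} (f - E f)`. -/
theorem simple_reverse_hyper_strong [Fintype Ω] (μ : Ω → ℝ)
    (hμpos : ∀ ω, 0 < μ ω) (hμ1 : ∑ ω, μ ω = 1)
    (f : Ω → ℝ) (hf : ∀ ω, 0 < f ω) (p q t : ℝ)
    (hcase : (q < p ∧ p ≤ 0 ∧ Real.log ((2 - q) / (2 - p)) ≤ t) ∨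
      (0 ≤ q ∧ q < p ∧ p < 1 ∧
        Real.log ((1 - q) * (2 - p) / ((1 - p) * (2 - q))) ≤ t)) :
    pnorm μ p f ≤
      pnorm μ q (fun ω => pexp μ f + Real.exp (-t) * (f ω - pexp μ f)) := by
  rcases isEmpty_or_nonempty Ω with hE | hN
  · exfalso
    rw [Finset.univ_eq_empty, Finset.sum_empty] at hμ1
    norm_num at hμ1
  have hμnn : ∀ ω, 0 ≤ μ ω := fun ω => (hμpos ω).le
  have hmpos : 0 < pexp μ f := pexp_pos μ hμpos hf
  set m := pexp μ f with hm
  set s := Real.exp (-t) with hsdef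
  have hspos : 0 < s := Real.exp_pos _
  set Y : Ω → ℝ := fun ω => f ω / m with hYdef
  have hYpos : ∀ ω, 0 < Y ω := fun ω => div_pos (hf ω) hmpos
  have hEY : pexp μ Y = 1 := by
    have e : Y = fun ω => m⁻¹ * f ω := funext fun ω => by
      rw [hYdef]; ring
    rw [e, pexp_scale, ← hm, inv_mul_cancel₀ hmpos.ne']
  have hfY : f = fun ω => m * Y ω := funext fun ω => by
    rw [hYdef]
    field_simp
  have hTf : (fun ω => m + s * (f ω - m)) = fun ω => m * (1 - s + s * Y ω) := by
    funext ω
    rw [hYdef]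
    field_simp
    ring
  obtain ⟨σ, hqp', hp1, hsσ, hσ1, hK⟩ :
      ∃ σ : ℝ, q < p ∧ p < 1 ∧ s ≤ σ ∧ σ ≤ 1 ∧ (∀ x : ℝ, 0 < x →
        (1 - q) * σ ^ 2 * (1 - σ + σ * x) ^ (q - 2) ≤ (1 - p) * x ^ (p - 2)) := by
    rcases hcase with ⟨hqp, hp0, ht⟩ | ⟨hq0, hqp, hp1, ht⟩
    · have h2q : (0:ℝ) < 2 - q := by linarith
      have h2p : (0:ℝ) < 2 - p := by linarith
      have hσpos : (0:ℝ) < (2 - p) / (2 - q) := by positivity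
      refine ⟨(2 - p) / (2 - q), hqp, by linarith, ?_, ?_, K1 hqp hp0⟩
      · calc s = Real.exp (-t) := hsdef
          _ ≤ Real.exp (Real.log ((2 - p) / (2 - q))) := Real.exp_le_exp.mpr (by
              have e : Real.log ((2 - p) / (2 - q)) = -Real.log ((2 - q) / (2 - p)) := by
                rw [← Real.log_inv, inv_div]
              linarith)
          _ = (2 - p) / (2 - q) := Real.exp_log hσpos
      · rw [div_le_one h2q]; linarith
    · have h2q : (0:ℝ) < 2 - q := by linarith
      have h2p : (0:ℝ) < 2 - p := by linarith
      have h1p : (0:ℝ) < 1 - p := by linarith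
      have h1q : (0:ℝ) < 1 - q := by linarith
      have hσpos : (0:ℝ) < (1 - p) * (2 - q) / ((1 - q) * (2 - p)) := by positivity
      refine ⟨(1 - p) * (2 - q) / ((1 - q) * (2 - p)), hqp, hp1, ?_, ?_, K2 hq0 hqp hp1⟩
      · calc s = Real.exp (-t) := hsdef
          _ ≤ Real.exp (Real.log ((1 - p) * (2 - q) / ((1 - q) * (2 - p)))) :=
              Real.exp_le_exp.mpr (by
                have e : Real.log ((1 - p) * (2 - q) / ((1 - q) * (2 - p)))
                    = -Real.log ((1 - q) * (2 - p) / ((1 - p) * (2 - q))) := by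
                  rw [← Real.log_inv, inv_div]
                linarith)
          _ = (1 - p) * (2 - q) / ((1 - q) * (2 - p)) := Real.exp_log hσpos
      · rw [div_le_one (by positivity)]; nlinarith
  have hUpos : ∀ ω, 0 < 1 - s + s * Y ω := fun ω => by
    nlinarith [hYpos ω, hsσ.trans hσ1]
  calc pnorm μ p f = pnorm μ p (fun ω => m * Y ω) := by rw [← hfY]
    _ = m * pnorm μ p Y := pnorm_scale μ hμnn hμ1 p hmpos hYpos
    _ ≤ m * pnorm μ q (fun ω => 1 - s + s * Y ω) :=
        mul_le_mul_of_nonneg_left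
          (main_norm μ hμpos hμ1 hYpos hEY hqp' hp1 hspos hsσ hσ1 hK) hmpos.le
    _ = pnorm μ q (fun ω => m * (1 - s + s * Y ω)) :=
        (pnorm_scale μ hμnn hμ1 q hmpos hUpos).symm
    _ = pnorm μ q (fun ω => m + s * (f ω - m)) := by rw [hTf]

end
end
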